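/- arXiv:1305.6239 — 9 statements merged into one kernel-verified Lean document; each statement's English description precedes it below -/
import Mathlib

section
/- Let (M,ρ) be a metric space and let μ be a Borel probability measure on M whose support X_μ is compact and which satisfies the (a,b)-standard assumption for some a>0, b>0. Let X₁,…,Xₙ be i.i.d. random variables with law μ and let X̂ₙ = {X₁,…,Xₙ}. Then for every ε>0, ℙ( d_H(X_μ, X̂ₙ) > 2ε ) ≤ min( (2^b/(a ε^b))·exp(−n a ε^b), 1 ). -/
open MeasureTheory Metric

lemma exists_net {M : Type*} [MetricSpace M] [MeasurableSpace M] [BorelSpace M]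
    (μ : Measure M) [IsProbabilityMeasure μ] (Xμ : Set M)
    (ε c : ℝ) (hε : 0 < ε) (hc : 0 < c)
    (hlow : ∀ x ∈ Xμ, ENNReal.ofReal c ≤ μ (ball x (ε / 2))) :
    ∃ s : Finset M, ↑s ⊆ Xμ ∧ (∀ x ∈ Xμ, ∃ y ∈ s, dist x y < ε) ∧
      (s.card : ℝ) * c ≤ 1 := by
  classical
  -- separated families
  set P : Finset M → Prop := fun s => ↑s ⊆ Xμ ∧ ∀ x ∈ s, ∀ y ∈ s, x ≠ y → ε ≤ dist x y with hP
  have cardbound : ∀ s : Finset M, P s → (s.card : ℝ) * c ≤ 1 := by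
    intro s hs
    have hdisj : (↑s : Set M).PairwiseDisjoint (fun x => ball x (ε / 2)) := by
      intro x hx y hy hxy
      exact ball_disjoint_ball (by linarith [hs.2 x hx y hy hxy])
    have hmeas : ∀ x ∈ s, MeasurableSet (ball x (ε / 2)) := fun x _ =>
      measurableSet_ball
    have hsum : ∑ x ∈ s, μ (ball x (ε / 2)) ≤ 1 := by
      rw [← measure_biUnion_finset hdisj hmeas]
      exact prob_le_one
    have hlb : (s.card : ℕ) • ENNReal.ofReal c ≤ ∑ x ∈ s, μ (ball x (ε / 2)) :=
      Finset.card_nsmul_le_sum s _ _ (fun x hx => hlow x (hs.1 hx))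
    have : ENNReal.ofReal ((s.card : ℝ) * c) ≤ 1 := by
      rw [ENNReal.ofReal_mul (by positivity), ENNReal.ofReal_natCast]
      calc (s.card : ENNReal) * ENNReal.ofReal c = s.card • ENNReal.ofReal c := by
            rw [nsmul_eq_mul]
        _ ≤ _ := hlb
        _ ≤ 1 := hsum
    rwa [ENNReal.ofReal_le_one] at this
  set T : Set ℕ := {k | ∃ s : Finset M, P s ∧ s.card = k} with hT
  have hT0 : (0 : ℕ) ∈ T := ⟨∅, ⟨by simp, by simp⟩, by simp⟩
  have hTbdd : BddAbove T := by
    refine ⟨⌈1 / c⌉₊, fun k hk => ?_⟩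
    obtain ⟨s, hs, rfl⟩ := hk
    have h1 : (s.card : ℝ) ≤ 1 / c := by
      rw [le_div_iff₀ hc]; exact cardbound s hs
    exact_mod_cast h1.trans (Nat.le_ceil _)
  obtain ⟨s, hs, hscard⟩ := Nat.sSup_mem ⟨0, hT0⟩ hTbdd
  refine ⟨s, hs.1, ?_, cardbound s hs⟩
  intro x hx
  by_contra hcon
  push_neg at hcon
  have hxs : x ∉ s := fun hmem => absurd (hcon x hmem) (by simpa using hε)
  have hPins : P (insert x s) := by
    constructor
    · rw [Finset.coe_insert]
      exact Set.insert_subset hx hs.1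
    · intro y hy z hz hyz
      rcases Finset.mem_insert.1 hy with hy' | hy' <;>
        rcases Finset.mem_insert.1 hz with hz' | hz'
      · exact absurd (hy'.trans hz'.symm) hyz
      · subst hy'; exact hcon z hz'
      · subst hz'; rw [dist_comm]; exact hcon y hy'
      · exact hs.2 y hy' z hz' hyz
  have : s.card + 1 ∈ T := ⟨insert x s, hPins, by rw [Finset.card_insert_of_notMem hxs]⟩
  have := le_csSup hTbdd this
  omega

/-- If `μ` is a Borel probability measure on a metric space `M` whose
support `Xμ` (the smallest closed set of full measure) is compact and which satisfies the
`(a,b)`-standard assumption, and `X̂ₙ = {X₁,…,Xₙ}` with `X₁,…,Xₙ` i.i.d. of law `μ`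
(modelled by the product measure `μ^⊗n` on `Fin n → M`), then for every `ε > 0`,
`ℙ(d_H(Xμ, X̂ₙ) > 2ε) ≤ min((2^b/(a εᵇ)) exp(-n a εᵇ), 1)`. -/
theorem stmt_0 {M : Type*} [MetricSpace M] [MeasurableSpace M] [BorelSpace M]
    (μ : Measure M) [IsProbabilityMeasure μ]
    (Xμ : Set M) (hXclosed : IsClosed Xμ) (hXfull : μ Xμ = 1)
    (hXmin : ∀ F : Set M, IsClosed F → μ F = 1 → Xμ ⊆ F)
    (hXcpt : IsCompact Xμ)
    (a b : ℝ) (ha : 0 < a) (hb : 0 < b)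
    (hstd : ∀ x ∈ Xμ, ∀ r : ℝ, 0 < r →
      ENNReal.ofReal (min (a * r ^ b) 1) ≤ μ (ball x r))
    (n : ℕ) (ε : ℝ) (hε : 0 < ε) :
    (Measure.pi fun _ : Fin n => μ)
        {ω : Fin n → M | 2 * ε < hausdorffDist Xμ (Set.range ω)}
      ≤ ENNReal.ofReal
          (min ((2 ^ b / (a * ε ^ b)) * Real.exp (-(n * a * ε ^ b))) 1) := by
  set ν := Measure.pi fun _ : Fin n => μ with hν
  set E := {ω : Fin n → M | 2 * ε < hausdorffDist Xμ (Set.range ω)} with hE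
  haveI : IsProbabilityMeasure ν := by rw [hν]; infer_instance
  rcases Nat.eq_zero_or_pos n with rfl | hn
  · have hEempty : E = ∅ := by
      ext ω
      simp only [hE, Set.mem_setOf_eq, Set.mem_empty_iff_false, iff_false, not_lt]
      rw [Set.range_eq_empty ω, hausdorffDist_empty]
      positivity
    rw [hEempty, measure_empty]
    exact zero_le
  -- positivity facts
  have hεb : (0:ℝ) < ε ^ b := Real.rpow_pos_of_pos hε b
  have h2b : (0:ℝ) < 2 ^ b := Real.rpow_pos_of_pos two_pos b
  -- the net
  set c : ℝ := min (a * (ε / 2) ^ b) 1 with hc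
  have hcpos : 0 < c := lt_min (by positivity) one_pos
  obtain ⟨s, hsub, hnet, hcard⟩ :=
    exists_net μ Xμ ε c hε hcpos (fun x hx => hstd x hx (ε / 2) (by positivity))
  -- the bad events
  set G : Set (Fin n → M) := Set.pi Set.univ (fun _ : Fin n => Xμ) with hG
  set F : M → Set (Fin n → M) :=
    fun x => Set.pi Set.univ (fun _ : Fin n => (ball x ε)ᶜ) with hF
  have hincl : E ⊆ Gᶜ ∪ ⋃ x ∈ s, F x := by
    intro ω hω
    rw [Set.mem_union]
    by_contra hcontra
    push_neg at hcontra
    obtain ⟨hGmem, hFmem⟩ := hcontra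
    rw [Set.notMem_compl_iff, hG, Set.mem_univ_pi] at hGmem
    have hball : ∀ x ∈ s, ∃ i, ω i ∈ ball x ε := by
      intro x hx
      have : ω ∉ F x := fun h => hFmem (Set.mem_biUnion hx h)
      rw [hF, Set.mem_univ_pi] at this
      push_neg at this
      obtain ⟨i, hi⟩ := this
      exact ⟨i, Set.notMem_compl_iff.1 hi⟩
    have hle : hausdorffDist Xμ (Set.range ω) ≤ 2 * ε := by
      apply hausdorffDist_le_of_mem_dist (by positivity)
      · intro p hp
        obtain ⟨y, hys, hdy⟩ := hnet p hp
        obtain ⟨i, hi⟩ := hball y hys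
        refine ⟨ω i, Set.mem_range_self i, ?_⟩
        have h1 : dist (ω i) y < ε := mem_ball.1 hi
        calc dist p (ω i) ≤ dist p y + dist y (ω i) := dist_triangle _ _ _
          _ ≤ 2 * ε := by rw [dist_comm y (ω i)]; linarith
      · rintro q ⟨i, rfl⟩
        exact ⟨ω i, hGmem i, by simp; positivity⟩
    have := hω
    rw [hE, Set.mem_setOf_eq] at this
    linarith
  -- measure of Gᶜ is zero
  have hGmeas : MeasurableSet G := MeasurableSet.univ_pi fun _ => hXclosed.measurableSet
  have hGone : ν G = 1 := by
    rw [hν, hG, Measure.pi_pi]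
    simp [hXfull]
  have hGc : ν Gᶜ = 0 := by
    rw [measure_compl hGmeas (measure_ne_top _ _), measure_univ, hGone, tsub_self]
  -- measure of F x
  have hFx : ∀ x : M, ν (F x) = μ (ball x ε)ᶜ ^ n := by
    intro x
    rw [hν, hF, Measure.pi_pi]
    simp [Finset.prod_const]
  have hmain : ν E ≤ ∑ x ∈ s, ν (F x) := by
    calc ν E ≤ ν (Gᶜ ∪ ⋃ x ∈ s, F x) := measure_mono hincl
      _ ≤ ν Gᶜ + ν (⋃ x ∈ s, F x) := measure_union_le _ _
      _ = ν (⋃ x ∈ s, F x) := by rw [hGc, zero_add]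
      _ ≤ ∑ x ∈ s, ν (F x) := measure_biUnion_finset_le _ _
  -- the key probability bound
  have key : ν E ≤ ENNReal.ofReal ((2 ^ b / (a * ε ^ b)) * Real.exp (-(n * a * ε ^ b))) := by
    by_cases hhalf : a * (ε / 2) ^ b ≤ 1
    · -- the generic case
      have hcval : c = a * (ε / 2) ^ b := min_eq_left hhalf
      have hdiv : (ε / 2) ^ b = ε ^ b / 2 ^ b := Real.div_rpow hε.le (by norm_num) b
      have hcardR : (s.card : ℝ) ≤ 2 ^ b / (a * ε ^ b) := by
        rw [hcval, hdiv] at hcard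
        rw [le_div_iff₀ (by positivity)]
        have h2 : (s.card : ℝ) * (a * (ε ^ b / 2 ^ b)) * 2 ^ b ≤ 1 * 2 ^ b :=
          mul_le_mul_of_nonneg_right hcard h2b.le
        calc (s.card : ℝ) * (a * ε ^ b)
            = (s.card : ℝ) * (a * (ε ^ b / 2 ^ b)) * 2 ^ b := by field_simp
          _ ≤ 1 * 2 ^ b := h2
          _ = 2 ^ b := one_mul _
      set m : ℝ := min (a * ε ^ b) 1 with hm
      have hm1 : m ≤ 1 := min_le_right _ _
      have hmpos : 0 < m := lt_min (by positivity) one_pos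
      have hFle : ∀ x ∈ s, ν (F x) ≤ ENNReal.ofReal ((1 - m) ^ n) := by
        intro x hx
        rw [hFx x]
        have hball : ENNReal.ofReal m ≤ μ (ball x ε) := hstd x (hsub hx) ε hε
        have hcompl : μ (ball x ε)ᶜ ≤ ENNReal.ofReal (1 - m) := by
          rw [measure_compl measurableSet_ball (measure_ne_top _ _), measure_univ]
          calc 1 - μ (ball x ε) ≤ 1 - ENNReal.ofReal m := tsub_le_tsub_left hball 1
            _ = ENNReal.ofReal (1 - m) := by
                rw [ENNReal.ofReal_sub 1 hmpos.le, ENNReal.ofReal_one]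
        calc μ (ball x ε)ᶜ ^ n ≤ ENNReal.ofReal (1 - m) ^ n :=
              pow_le_pow_left₀ zero_le hcompl n
          _ = ENNReal.ofReal ((1 - m) ^ n) := (ENNReal.ofReal_pow (by linarith) n).symm
      have hexp : (1 - m) ^ n ≤ Real.exp (-(n * a * ε ^ b)) := by
        by_cases ham : a * ε ^ b ≤ 1
        · have hmeq : m = a * ε ^ b := min_eq_left ham
          have h1 : 1 - m ≤ Real.exp (-m) := by
            have := Real.add_one_le_exp (-m); linarith
          calc (1 - m) ^ n ≤ Real.exp (-m) ^ n :=
                pow_le_pow_left₀ (by linarith) h1 n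
            _ = Real.exp (n * (-m)) := (Real.exp_nat_mul _ n).symm
            _ = Real.exp (-(n * a * ε ^ b)) := by rw [hmeq]; ring_nf
        · have hmeq : m = 1 := min_eq_right (by linarith)
          rw [hmeq, sub_self, zero_pow hn.ne']
          positivity
      calc ν E ≤ ∑ x ∈ s, ν (F x) := hmain
        _ ≤ ∑ _x ∈ s, ENNReal.ofReal ((1 - m) ^ n) := Finset.sum_le_sum hFle
        _ = (s.card : ENNReal) * ENNReal.ofReal ((1 - m) ^ n) := by
            rw [Finset.sum_const, nsmul_eq_mul]
        _ = ENNReal.ofReal ((s.card : ℝ) * (1 - m) ^ n) := by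
            rw [ENNReal.ofReal_mul (by positivity), ENNReal.ofReal_natCast]
        _ ≤ ENNReal.ofReal ((2 ^ b / (a * ε ^ b)) * Real.exp (-(n * a * ε ^ b))) := by
            apply ENNReal.ofReal_le_ofReal
            exact mul_le_mul hcardR hexp (pow_nonneg (by linarith) n) (by positivity)
    · -- the degenerate case : every ball has full measure
      push_neg at hhalf
      have haeb : 1 ≤ a * ε ^ b := by
        have hmono : (ε / 2) ^ b ≤ ε ^ b :=
          Real.rpow_le_rpow (by positivity) (by linarith) hb.le
        nlinarith
      have hFzero : ∀ x ∈ s, ν (F x) = 0 := by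
        intro x hx
        have hball : μ (ball x ε) = 1 := by
          apply le_antisymm prob_le_one
          have := hstd x (hsub hx) ε hε
          rwa [min_eq_right haeb, ENNReal.ofReal_one] at this
        rw [hFx x, measure_compl measurableSet_ball (measure_ne_top _ _),
          measure_univ, hball, tsub_self, zero_pow hn.ne']
      have : ν E ≤ 0 := by
        calc ν E ≤ ∑ x ∈ s, ν (F x) := hmain
          _ = 0 := Finset.sum_eq_zero hFzero
      exact this.trans zero_le
  -- combine with the trivial bound by one
  have hone : ν E ≤ ENNReal.ofReal 1 := by rw [ENNReal.ofReal_one]; exact prob_le_one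
  have hmono : Monotone ENNReal.ofReal := fun _ _ h => ENNReal.ofReal_le_ofReal h
  rw [hmono.map_min]
  exact le_min key hone
end

section
/- Let (M,ρ) be a metric space and let μ be a Borel probability measure on M whose support X_μ is compact and which satisfies the (a,b)-standard assumption for some a>0, b>0. Let (X_i)_{i≥1} be an i.i.d. sequence with law μ and let X̂ₙ = {X₁,…,Xₙ}. Then there exists a constant C₁ > 0 depending only on a and b such that, almost surely, limsup_{n→∞} (n/log n)^{1/b} · d_H(X_μ, X̂ₙ) ≤ C₁. -/
open MeasureTheory Metric Filter
open scoped ENNReal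

lemma net_lemma {M : Type} [MetricSpace M] [MeasurableSpace M] [BorelSpace M]
    (μ : Measure M) [IsProbabilityMeasure μ] (K : Set M) (ε : ℝ) (hε : 0 < ε)
    (q : ℝ≥0∞) (hq : 0 < q)
    (hmeas : ∀ x ∈ K, q ≤ μ (ball x (ε / 2))) :
    ∃ F : Finset M, ↑F ⊆ K ∧ (∀ x ∈ K, ∃ c ∈ F, dist x c < ε) ∧
      (F.card : ℝ≥0∞) * q ≤ 1 := by
  classical
  set Sep : Finset M → Prop := fun F =>
    ↑F ⊆ K ∧ ∀ c ∈ F, ∀ c' ∈ F, c ≠ c' → ε ≤ dist c c' with hSep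
  have card_bound : ∀ F : Finset M, Sep F → (F.card : ℝ≥0∞) * q ≤ 1 := by
    rintro F ⟨hFK, hsep⟩
    have hdisj : (↑F : Set M).PairwiseDisjoint (fun c => ball c (ε / 2)) := by
      intro c hc c' hc' hne
      exact ball_disjoint_ball (by linarith [hsep c hc c' hc' hne])
    calc (F.card : ℝ≥0∞) * q = ∑ _c ∈ F, q := by
          rw [Finset.sum_const, nsmul_eq_mul]
      _ ≤ ∑ c ∈ F, μ (ball c (ε / 2)) :=
          Finset.sum_le_sum fun c hc => hmeas c (hFK hc)
      _ = μ (⋃ c ∈ F, ball c (ε / 2)) :=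
          (measure_biUnion_finset hdisj fun c _ => measurableSet_ball).symm
      _ ≤ 1 := prob_le_one
  -- a uniform bound on cardinalities
  have h1q : (1 : ℝ≥0∞) / q ≠ ⊤ := by
    simp [ENNReal.div_eq_top, hq.ne']
  obtain ⟨m, hm⟩ := ENNReal.exists_nat_gt h1q
  have card_le : ∀ F : Finset M, Sep F → F.card ≤ m := by
    intro F hF
    have h1 : (F.card : ℝ≥0∞) ≤ 1 / q :=
      (ENNReal.le_div_iff_mul_le (Or.inl hq.ne') (Or.inr ENNReal.one_ne_top)).2 (card_bound F hF)
    have := h1.trans_lt hm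
    exact_mod_cast this.le
  set C : Set ℕ := {k | ∃ F : Finset M, Sep F ∧ F.card = k} with hC
  have hC0 : 0 ∈ C := ⟨∅, ⟨by simp, by simp⟩, rfl⟩
  have hCbdd : BddAbove C := ⟨m, by rintro k ⟨F, hF, rfl⟩; exact card_le F hF⟩
  obtain ⟨F, hFsep, hFcard⟩ : sSup C ∈ C := Nat.sSup_mem ⟨0, hC0⟩ hCbdd
  refine ⟨F, hFsep.1, ?_, card_bound F hFsep⟩
  intro x hx
  by_contra hcon
  push_neg at hcon
  have hxF : x ∉ F := fun hxF => absurd (hcon x hxF) (by simp [hε])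
  have hsep' : Sep (insert x F) := by
    constructor
    · rw [Finset.coe_insert]
      exact Set.insert_subset hx hFsep.1
    · intro c hc c' hc' hne
      rcases Finset.mem_insert.1 hc with hcx | hcF
      · rcases Finset.mem_insert.1 hc' with hcx' | hcF'
        · exact absurd (hcx.trans hcx'.symm) hne
        · rw [hcx]; exact hcon c' hcF'
      · rcases Finset.mem_insert.1 hc' with hcx' | hcF'
        · rw [hcx', dist_comm]; exact hcon c hcF
        · exact hFsep.2 c hcF c' hcF' hne
  have : (insert x F).card ∈ C := ⟨_, hsep', rfl⟩
  have hle := le_csSup hCbdd this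
  rw [Finset.card_insert_of_notMem hxF, hFcard] at hle
  omega

lemma three_log_le (n : ℕ) (hn : 36 ≤ n) : 3 * Real.log n ≤ n := by
  have h1 : (36 : ℝ) ≤ n := by exact_mod_cast hn
  have hpos : (0 : ℝ) < n := by linarith
  have hs : Real.log n = 2 * Real.log (Real.sqrt n) := by
    rw [Real.log_sqrt hpos.le]; ring
  have h2 : Real.log (Real.sqrt n) ≤ Real.sqrt n - 1 :=
    Real.log_le_sub_one_of_pos (Real.sqrt_pos.mpr hpos)
  have h36 : Real.sqrt 36 = 6 := by
    rw [show (36 : ℝ) = 6 ^ 2 by norm_num, Real.sqrt_sq (by norm_num)]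
  have h3 : (6 : ℝ) ≤ Real.sqrt n := by
    rw [← h36]; exact Real.sqrt_le_sqrt h1
  have h4 : Real.sqrt n * Real.sqrt n = n := Real.mul_self_sqrt hpos.le
  nlinarith

lemma one_sub_pow_le (t : ℝ) (ht : t ≤ 1) (n : ℕ) :
    (1 - t) ^ n ≤ Real.exp (-((n : ℝ) * t)) := by
  have h1 : 1 - t ≤ Real.exp (-t) := by
    have := Real.add_one_le_exp (-t); linarith
  calc (1 - t) ^ n ≤ Real.exp (-t) ^ n :=
        pow_le_pow_left₀ (by linarith) h1 n
    _ = Real.exp (-((n : ℝ) * t)) := by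
        rw [← Real.exp_nat_mul]; ring_nf

/-- There is a constant `C₁ > 0` depending only on `a` and `b` such that
for every metric space `M`, every Borel probability measure `μ` on `M` whose support `Xμ`
(the smallest closed set of full measure) is compact and which satisfies the
`(a,b)`-standard assumption, and every i.i.d. sequence `(Xᵢ)` of law `μ`, almost surely
`limsup_{n→∞} (n / log n)^{1/b} · d_H(Xμ, {X₁,…,Xₙ}) ≤ C₁`. -/
theorem stmt_1 (a b : ℝ) (ha : 0 < a) (hb : 0 < b) :
    ∃ C₁ : ℝ, 0 < C₁ ∧
      ∀ (M : Type) [MetricSpace M] [MeasurableSpace M] [BorelSpace M]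
        (μ : Measure M), IsProbabilityMeasure μ →
        ∀ Xμ : Set M, IsClosed Xμ → μ Xμ = 1 →
          (∀ F : Set M, IsClosed F → μ F = 1 → Xμ ⊆ F) → IsCompact Xμ →
          (∀ x ∈ Xμ, ∀ r : ℝ, 0 < r →
            ENNReal.ofReal (min (a * r ^ b) 1) ≤ μ (ball x r)) →
        ∀ (Ω : Type) [MeasurableSpace Ω] (P : Measure Ω), IsProbabilityMeasure P →
        ∀ X : ℕ → Ω → M,
          (∀ i, Measurable (X i)) →
          (∀ i, Measure.map (X i) P = μ) →
          ProbabilityTheory.iIndepFun X P →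
          ∀ᵐ ω ∂P,
            Filter.limsup
              (fun n : ℕ =>
                ((n : ℝ) / Real.log n) ^ ((1 : ℝ) / b) *
                  hausdorffDist Xμ {y : M | ∃ i < n, y = X i ω})
              Filter.atTop ≤ C₁ := by
  classical
  have hb' : b ≠ 0 := hb.ne'
  refine ⟨2 * (3 / a) ^ ((1 : ℝ) / b), by positivity, ?_⟩
  intro M _ _ _ μ hμ Xμ hXclosed hXfull hXmin hXcomp hstd Ω _ P hP X hXm hXlaw hindep
  set t : ℕ → ℝ := fun n => 3 * Real.log n / n with ht
  set ε : ℕ → ℝ := fun n => (t n / a) ^ ((1 : ℝ) / b) with hε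
  -- basic facts for n ≥ 36
  have hncast : ∀ n : ℕ, 36 ≤ n → (36 : ℝ) ≤ n := fun n hn => by exact_mod_cast hn
  have hlog1 : ∀ n : ℕ, 36 ≤ n → 1 ≤ 3 * Real.log n := by
    intro n hn
    have h2 : (2 : ℝ) ≤ n := by linarith [hncast n hn]
    have hl := Real.log_le_log (by norm_num : (0:ℝ) < 2) h2
    have h02 := Real.log_two_gt_d9
    linarith
  have htpos : ∀ n : ℕ, 36 ≤ n → 0 < t n := by
    intro n hn
    have := hncast n hn
    have := hlog1 n hn
    apply div_pos <;> linarith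
  have ht1 : ∀ n : ℕ, 36 ≤ n → t n ≤ 1 := by
    intro n hn
    have h1 := three_log_le n hn
    have h2 := hncast n hn
    rw [ht]
    exact div_le_one_of_le₀ h1 (by linarith)
  have hεpos : ∀ n : ℕ, 36 ≤ n → 0 < ε n := fun n hn =>
    Real.rpow_pos_of_pos (div_pos (htpos n hn) ha) _
  have hεb : ∀ n : ℕ, 36 ≤ n → a * ε n ^ b = t n := by
    intro n hn
    have h0 : (0 : ℝ) ≤ t n / a := (div_pos (htpos n hn) ha).le
    rw [hε]
    show a * ((t n / a) ^ ((1:ℝ)/b)) ^ b = t n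
    rw [← Real.rpow_mul h0, one_div_mul_cancel hb', Real.rpow_one, mul_comm,
      div_mul_cancel₀ _ ha.ne']
  have h2b : (1 : ℝ) ≤ 2 ^ b := by
    rw [show (1 : ℝ) = (2 : ℝ) ^ (0 : ℝ) by simp]
    exact Real.rpow_le_rpow_of_exponent_le (by norm_num) hb.le
  have h2bpos : (0 : ℝ) < 2 ^ b := by positivity
  have hballε : ∀ n : ℕ, 36 ≤ n → ∀ x ∈ Xμ, ENNReal.ofReal (t n) ≤ μ (ball x (ε n)) := by
    intro n hn x hx
    have h := hstd x hx (ε n) (hεpos n hn)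
    rwa [hεb n hn, min_eq_left (ht1 n hn)] at h
  have hhalf : ∀ n : ℕ, 36 ≤ n → a * (ε n / 2) ^ b = t n / 2 ^ b := by
    intro n hn
    rw [Real.div_rpow (hεpos n hn).le (by norm_num), ← mul_div_assoc, hεb n hn]
  have hballhalf : ∀ n : ℕ, 36 ≤ n → ∀ x ∈ Xμ,
      ENNReal.ofReal (t n / 2 ^ b) ≤ μ (ball x (ε n / 2)) := by
    intro n hn x hx
    have h := hstd x hx (ε n / 2) (half_pos (hεpos n hn))
    rwa [hhalf n hn, min_eq_left (by
      rw [div_le_one h2bpos]; exact (ht1 n hn).trans h2b)] at h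
  -- nets
  have hnet : ∀ n : ℕ, ∃ F : Finset M, 36 ≤ n →
      (↑F ⊆ Xμ ∧ (∀ x ∈ Xμ, ∃ c ∈ F, dist x c < ε n) ∧ (F.card : ℝ) ≤ 2 ^ b * n) := by
    intro n
    by_cases hn : 36 ≤ n
    · have hspos : (0 : ℝ) < t n / 2 ^ b := div_pos (htpos n hn) h2bpos
      obtain ⟨F, hF1, hF2, hF3⟩ := net_lemma μ Xμ (ε n) (hεpos n hn)
        (ENNReal.ofReal (t n / 2 ^ b)) (ENNReal.ofReal_pos.2 hspos) (hballhalf n hn)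
      refine ⟨F, fun _ => ⟨hF1, hF2, ?_⟩⟩
      have h1 : (F.card : ℝ) * (t n / 2 ^ b) ≤ 1 := by
        rw [← ENNReal.ofReal_le_one, ENNReal.ofReal_mul (Nat.cast_nonneg _),
          ENNReal.ofReal_natCast]
        exact hF3
      have h2 : (F.card : ℝ) ≤ 1 / (t n / 2 ^ b) := (le_div_iff₀ hspos).2 h1
      refine h2.trans ?_
      rw [div_le_iff₀ hspos]
      have key : 2 ^ b * (n : ℝ) * (t n / 2 ^ b) = 3 * Real.log n := by
        rw [ht]
        have hn0 : (n : ℝ) ≠ 0 := by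
          have := hncast n hn; intro h; rw [h] at this; linarith
        field_simp
      rw [key]
      exact hlog1 n hn
    · exact ⟨∅, fun h => absurd h hn⟩
  choose F hF using hnet
  -- bad events
  set Bad : ℕ → Set Ω := fun n =>
    if 36 ≤ n then ⋃ c ∈ F n, ⋂ i ∈ Finset.range n, X i ⁻¹' (ball c (ε n))ᶜ
    else ∅ with hBad
  have hbadP : ∀ n : ℕ, P (Bad n) ≤ ENNReal.ofReal (2 ^ b / (n : ℝ) ^ 2) := by
    intro n
    by_cases hn : 36 ≤ n
    · obtain ⟨hF1, hF2, hF3⟩ := hF n hn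
      have hn0 : (0 : ℝ) < n := by linarith [hncast n hn]
      have hcenter : ∀ c ∈ F n,
          P (⋂ i ∈ Finset.range n, X i ⁻¹' (ball c (ε n))ᶜ)
            ≤ ENNReal.ofReal (1 / (n : ℝ) ^ 3) := by
        intro c hc
        have hmeasb : MeasurableSet ((ball c (ε n))ᶜ : Set M) := measurableSet_ball.compl
        have hprod := hindep.measure_inter_preimage_eq_mul (Finset.range n)
          (sets := fun _ => (ball c (ε n))ᶜ) (fun i _ => hmeasb)
        rw [hprod]
        have hfac : ∀ i ∈ Finset.range n,
            P (X i ⁻¹' (ball c (ε n))ᶜ) ≤ 1 - ENNReal.ofReal (t n) := by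
          intro i _
          rw [← Measure.map_apply (hXm i) hmeasb, hXlaw i,
            measure_compl measurableSet_ball (measure_ne_top μ _), measure_univ]
          exact tsub_le_tsub_left (hballε n hn c (hF1 hc)) 1
        calc ∏ i ∈ Finset.range n, P (X i ⁻¹' (ball c (ε n))ᶜ)
            ≤ (1 - ENNReal.ofReal (t n)) ^ (Finset.range n).card :=
              Finset.prod_le_pow_card _ _ _ hfac
          _ = ENNReal.ofReal (1 - t n) ^ n := by
              rw [Finset.card_range, ENNReal.ofReal_sub _ (htpos n hn).le,
                ENNReal.ofReal_one]
          _ = ENNReal.ofReal ((1 - t n) ^ n) :=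
              (ENNReal.ofReal_pow (by linarith [ht1 n hn]) n).symm
          _ ≤ ENNReal.ofReal (1 / (n : ℝ) ^ 3) := by
              apply ENNReal.ofReal_le_ofReal
              have hnt : (n : ℝ) * t n = 3 * Real.log n := by
                rw [ht]; field_simp
              calc (1 - t n) ^ n ≤ Real.exp (-((n : ℝ) * t n)) :=
                    one_sub_pow_le _ (ht1 n hn) n
                _ = 1 / (n : ℝ) ^ 3 := by
                    rw [hnt, Real.exp_neg,
                      show (3 : ℝ) * Real.log n = ((3 : ℕ) : ℝ) * Real.log n by norm_num,
                      Real.exp_nat_mul, Real.exp_log hn0, one_div]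
      calc P (Bad n)
          ≤ ∑ c ∈ F n, P (⋂ i ∈ Finset.range n, X i ⁻¹' (ball c (ε n))ᶜ) := by
            rw [hBad]; simp only [if_pos hn]
            exact measure_biUnion_finset_le _ _
        _ ≤ ∑ _c ∈ F n, ENNReal.ofReal (1 / (n : ℝ) ^ 3) := Finset.sum_le_sum hcenter
        _ = ((F n).card : ℝ≥0∞) * ENNReal.ofReal (1 / (n : ℝ) ^ 3) := by
            rw [Finset.sum_const, nsmul_eq_mul]
        _ ≤ ENNReal.ofReal (2 ^ b * n) * ENNReal.ofReal (1 / (n : ℝ) ^ 3) := by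
            apply mul_le_mul_left
            rw [← ENNReal.ofReal_natCast]
            exact ENNReal.ofReal_le_ofReal hF3
        _ = ENNReal.ofReal (2 ^ b / (n : ℝ) ^ 2) := by
            rw [← ENNReal.ofReal_mul (by positivity)]
            congr 1
            field_simp
    · rw [hBad]; simp only [if_neg hn]
      simp
  -- Borel–Cantelli
  have hsummable : Summable (fun n : ℕ => 2 ^ b / (n : ℝ) ^ 2) := by
    have h1 : Summable (fun n : ℕ => 1 / (n : ℝ) ^ 2) :=
      Real.summable_one_div_nat_pow.2 one_lt_two
    have := h1.mul_left (2 ^ b)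
    convert this using 2 with n
    · rfl
    ring
  have hsum : (∑' n, P (Bad n)) ≠ ⊤ := by
    have h1 : (∑' n, P (Bad n)) ≤ ∑' (n : ℕ), ENNReal.ofReal (2 ^ b / (n : ℝ) ^ 2) :=
      ENNReal.tsum_le_tsum hbadP
    rw [← ENNReal.ofReal_tsum_of_nonneg (fun n => by positivity) hsummable] at h1
    exact (h1.trans_lt ENNReal.ofReal_lt_top).ne
  have hae1 := ae_eventually_notMem hsum
  have hae2 : ∀ᵐ ω ∂P, ∀ i, X i ω ∈ Xμ := by
    rw [ae_all_iff]
    intro i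
    have h1 : P (X i ⁻¹' Xμ) = 1 := by
      rw [← Measure.map_apply (hXm i) hXclosed.measurableSet, hXlaw i]
      exact hXfull
    have h2 : P ((X i ⁻¹' Xμ)ᶜ) = 0 := by
      rw [measure_compl (hXclosed.measurableSet.preimage (hXm i)) (measure_ne_top _ _),
        h1, measure_univ, tsub_self]
    exact h2
  filter_upwards [hae1, hae2] with ω hω hmemω
  apply limsup_le_of_le (isCoboundedUnder_le_of_le atTop (x := 0) ?nonneg)
  case nonneg =>
    intro n
    have h1 : (0 : ℝ) ≤ (n : ℝ) / Real.log n := by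
      rcases Nat.eq_zero_or_pos n with rfl | hn
      · simp
      · exact div_nonneg (Nat.cast_nonneg n)
          (Real.log_natCast_nonneg n)
    exact mul_nonneg (Real.rpow_nonneg h1 _) hausdorffDist_nonneg
  filter_upwards [hω, eventually_ge_atTop 36] with n hωn hn
  obtain ⟨hF1, hF2, hF3⟩ := hF n hn
  have hn0 : (0 : ℝ) < n := by linarith [hncast n hn]
  have hlogpos : 0 < Real.log n := Real.log_pos (by
    have := hncast n hn; linarith)
  set S : Set M := {y : M | ∃ i < n, y = X i ω} with hS
  have hdH : hausdorffDist Xμ S ≤ 2 * ε n := by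
    apply hausdorffDist_le_of_mem_dist (by linarith [hεpos n hn])
    · intro x hx
      obtain ⟨c, hcF, hxc⟩ := hF2 x hx
      rw [hBad] at hωn
      simp only [if_pos hn] at hωn
      have hnot : ω ∉ ⋂ i ∈ Finset.range n, X i ⁻¹' (ball c (ε n))ᶜ :=
        fun hmem => hωn (Set.mem_biUnion hcF hmem)
      simp only [Set.mem_iInter, Set.mem_preimage, Set.mem_compl_iff, not_forall,
        not_not] at hnot
      obtain ⟨i, hi, hib⟩ := hnot
      refine ⟨X i ω, ⟨i, Finset.mem_range.1 hi, rfl⟩, ?_⟩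
      have hd : dist (X i ω) c < ε n := mem_ball.1 hib
      calc dist x (X i ω) ≤ dist x c + dist c (X i ω) := dist_triangle _ _ _
        _ ≤ ε n + ε n := by
            rw [dist_comm c (X i ω)]; linarith
        _ = 2 * ε n := by ring
    · rintro y ⟨i, _, rfl⟩
      exact ⟨X i ω, hmemω i, by rw [dist_self]; linarith [hεpos n hn]⟩
  have hrnn : (0 : ℝ) ≤ ((n : ℝ) / Real.log n) ^ ((1 : ℝ) / b) :=
    Real.rpow_nonneg (div_nonneg hn0.le hlogpos.le) _
  calc ((n : ℝ) / Real.log n) ^ ((1 : ℝ) / b) * hausdorffDist Xμ S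
      ≤ ((n : ℝ) / Real.log n) ^ ((1 : ℝ) / b) * (2 * ε n) :=
        mul_le_mul_of_nonneg_left hdH hrnn
    _ = 2 * (((n : ℝ) / Real.log n) ^ ((1 : ℝ) / b) * (t n / a) ^ ((1 : ℝ) / b)) := by
        rw [hε]; ring
    _ = 2 * (((n : ℝ) / Real.log n) * (t n / a)) ^ ((1 : ℝ) / b) := by
        rw [← Real.mul_rpow (div_nonneg hn0.le hlogpos.le) (div_pos (htpos n hn) ha).le]
    _ = 2 * (3 / a) ^ ((1 : ℝ) / b) := by
        congr 2
        rw [ht]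
        field_simp
end

section
/- Let (M,ρ) be a metric space and let μ be a Borel probability measure on M whose support X_μ is compact and which satisfies the (a,b)-standard assumption for some a>0, b>0. For each n let X₁,…,Xₙ be i.i.d. with law μ and X̂ₙ = {X₁,…,Xₙ}. Then there exists a constant C₂ > 0 depending only on a and b such that lim_{n→∞} ℙ( d_H(X_μ, X̂ₙ) ≤ C₂ (log n / n)^{1/b} ) = 1. -/
open MeasureTheory Metric Filter
open scoped ENNReal

lemma two_log_le_self (n : ℕ) (hn : 1 ≤ n) : 2 * Real.log n ≤ n := by
  have hn0 : (0:ℝ) ≤ n := Nat.cast_nonneg n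
  have hn1 : (1:ℝ) ≤ n := by exact_mod_cast hn
  set s := Real.sqrt n with hs
  have hs0 : 0 < s := Real.sqrt_pos.2 (by linarith)
  have hsq : s ^ 2 = n := Real.sq_sqrt hn0
  have hlog : Real.log n = 2 * Real.log s := by
    rw [hs, Real.log_sqrt hn0]; ring
  have h1 : Real.log s ≤ s - 1 := Real.log_le_sub_one_of_pos hs0
  nlinarith [sq_nonneg (s - 2)]

lemma exists_maximal_separated {M : Type} [MetricSpace M] (K : Set M) {r : ℝ} (hr : 0 < r) :
    ∃ T, T ⊆ K ∧ (∀ x ∈ T, ∀ y ∈ T, x ≠ y → r ≤ dist x y) ∧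
      ∀ x ∈ K, ∃ c ∈ T, dist x c < r := by
  obtain ⟨T, hT⟩ := zorn_subset
      {T : Set M | T ⊆ K ∧ ∀ x ∈ T, ∀ y ∈ T, x ≠ y → r ≤ dist x y} (by
        intro c hc hchain
        refine ⟨⋃₀ c, ⟨Set.sUnion_subset fun s hs => (hc hs).1, ?_⟩,
          fun s hs => Set.subset_sUnion_of_mem hs⟩
        rintro x ⟨s, hs, hxs⟩ y ⟨s', hs', hys'⟩ hxy
        rcases hchain.total hs hs' with h | h
        · exact (hc hs').2 x (h hxs) y hys' hxy
        · exact (hc hs).2 x hxs y (h hys') hxy)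
  refine ⟨T, hT.prop.1, hT.prop.2, fun x hx => ?_⟩
  by_contra hno
  push_neg at hno
  have hmem : insert x T ∈
      {T : Set M | T ⊆ K ∧ ∀ x ∈ T, ∀ y ∈ T, x ≠ y → r ≤ dist x y} := by
    refine ⟨Set.insert_subset hx hT.prop.1, ?_⟩
    intro p hp q hq hpq
    rcases Set.mem_insert_iff.1 hp with rfl | hp'
    · rcases Set.mem_insert_iff.1 hq with rfl | hq'
      · exact absurd rfl hpq
      · exact hno q hq'
    · rcases Set.mem_insert_iff.1 hq with rfl | hq'
      · rw [dist_comm]; exact hno p hp'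
      · exact hT.prop.2 p hp' q hq' hpq
  have hsub : insert x T ⊆ T := hT.2 hmem (Set.subset_insert x T)
  have hxT : x ∈ T := hsub (Set.mem_insert x T)
  have := hno x hxT
  rw [dist_self] at this
  linarith

lemma separated_finite_card {M : Type} [MetricSpace M] [MeasurableSpace M]
    [OpensMeasurableSpace M]
    (μ : Measure M) [IsProbabilityMeasure μ] {T : Set M} {r δ : ℝ} (hδ : 0 < δ)
    (hsep : ∀ x ∈ T, ∀ y ∈ T, x ≠ y → r ≤ dist x y)
    (hm : ∀ c ∈ T, ENNReal.ofReal δ ≤ μ (ball c (r/2))) :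
    ∃ F : Finset M, ↑F = T ∧ (F.card : ℝ) * δ ≤ 1 := by
  have key : ∀ F : Finset M, ↑F ⊆ T → (F.card : ℝ) * δ ≤ 1 := by
    intro F hF
    have hdisj : (↑F : Set M).PairwiseDisjoint (fun c => ball c (r/2)) := by
      intro c hc c' hc' hne
      refine Set.disjoint_left.2 fun x hx hx' => ?_
      have h1 := hsep c (hF hc) c' (hF hc') hne
      have h2 : dist x c < r/2 := mem_ball.1 hx
      have h3 : dist x c' < r/2 := mem_ball.1 hx'
      have h4 : dist c c' < r := by
        calc dist c c' ≤ dist c x + dist x c' := dist_triangle _ _ _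
          _ < r/2 + r/2 := by rw [dist_comm c x]; exact add_lt_add h2 h3
          _ = r := by ring
      linarith
    have hsum : (F.card : ℝ≥0∞) * ENNReal.ofReal δ ≤ 1 := by
      calc (F.card : ℝ≥0∞) * ENNReal.ofReal δ = ∑ _c ∈ F, ENNReal.ofReal δ := by
            rw [Finset.sum_const, nsmul_eq_mul]
        _ ≤ ∑ c ∈ F, μ (ball c (r/2)) := Finset.sum_le_sum fun c hc => hm c (hF hc)
        _ = μ (⋃ c ∈ F, ball c (r/2)) :=
            (measure_biUnion_finset hdisj fun c _ => measurableSet_ball).symm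
        _ ≤ 1 := prob_le_one
    rw [← ENNReal.ofReal_natCast, ← ENNReal.ofReal_mul (Nat.cast_nonneg _),
      ENNReal.ofReal_le_one] at hsum
    exact hsum
  have hfin : T.Finite := by
    by_contra hinf
    obtain ⟨F, hFT, hFcard⟩ :=
      Set.Infinite.exists_subset_card_eq hinf (⌈(1/δ : ℝ)⌉₊ + 1)
    have h1 := key F hFT
    have h2 : (1/δ : ℝ) ≤ ⌈(1/δ : ℝ)⌉₊ := Nat.le_ceil _
    have h3 : (1/δ : ℝ) * δ = 1 := by field_simp
    rw [hFcard] at h1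
    push_cast at h1
    nlinarith
  exact ⟨hfin.toFinset, hfin.coe_toFinset,
    key _ (by rw [hfin.coe_toFinset])⟩

/-- There is a constant `C₂ > 0` depending only on `a` and `b` such that
for every metric space `M` and every Borel probability measure `μ` on `M` whose support
`Xμ` (the smallest closed set of full measure) is compact and which satisfies the
`(a,b)`-standard assumption, the probability (under `μ^⊗n`) that
`d_H(Xμ, {X₁,…,Xₙ}) ≤ C₂ (log n / n)^{1/b}` tends to `1` as `n → ∞`. -/
theorem stmt_2 (a b : ℝ) (ha : 0 < a) (hb : 0 < b) :
    ∃ C₂ : ℝ, 0 < C₂ ∧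
      ∀ (M : Type) [MetricSpace M] [MeasurableSpace M] [BorelSpace M]
        (μ : Measure M), IsProbabilityMeasure μ →
        ∀ Xμ : Set M, IsClosed Xμ → μ Xμ = 1 →
          (∀ F : Set M, IsClosed F → μ F = 1 → Xμ ⊆ F) → IsCompact Xμ →
          (∀ x ∈ Xμ, ∀ r : ℝ, 0 < r →
            ENNReal.ofReal (min (a * r ^ b) 1) ≤ μ (ball x r)) →
          Filter.Tendsto
            (fun n : ℕ =>
              ((Measure.pi fun _ : Fin n => μ)
                {ω : Fin n → M |
                  hausdorffDist Xμ (Set.range ω)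
                    ≤ C₂ * (Real.log n / n) ^ ((1 : ℝ) / b)}).toReal)
            Filter.atTop (nhds 1) := by
  refine ⟨2 * (2 / a) ^ ((1:ℝ)/b), by positivity, ?_⟩
  intro M _ _ _ μ hprob Xμ hXcl hX1 _hXmin _hXcpt hstd
  have hC0 : (0:ℝ) < 2 * (2 / a) ^ ((1:ℝ)/b) := by positivity
  -- the error probability bound
  have hδ0 : Tendsto (fun n : ℕ => (2:ℝ)^(b-1) / ((n:ℝ) * Real.log n)) atTop (nhds 0) := by
    apply Tendsto.div_atTop tendsto_const_nhds
    exact (tendsto_natCast_atTop_atTop (R := ℝ)).atTop_mul_atTop₀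
      (Real.tendsto_log_atTop.comp (tendsto_natCast_atTop_atTop (R := ℝ)))
  have hlow : Tendsto (fun n : ℕ => 1 - (2:ℝ)^(b-1) / ((n:ℝ) * Real.log n)) atTop (nhds 1) := by
    simpa using tendsto_const_nhds.sub hδ0
  refine tendsto_of_tendsto_of_tendsto_of_le_of_le' hlow tendsto_const_nhds ?_ ?_
  swap
  · filter_upwards with n
    exact ENNReal.toReal_le_of_le_ofReal one_pos.le
      (by rw [ENNReal.ofReal_one]; exact prob_le_one)
  filter_upwards [eventually_ge_atTop 2] with n hn
  set ν := Measure.pi (fun _ : Fin n => μ) with hν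
  have hn1 : (1:ℝ) < n := by exact_mod_cast hn
  have hn0 : (0:ℝ) < n := by linarith
  set L := Real.log n with hLdef
  have hL0 : 0 < L := Real.log_pos hn1
  set t := 2 * L / n with htdef
  have ht0 : 0 < t := by positivity
  have ht1 : t ≤ 1 := by
    have h2l := two_log_le_self n (by omega)
    rw [htdef, div_le_one hn0]; exact h2l
  set q := L / n with hqdef
  have hq0 : 0 < q := by positivity
  set r := (2/a) ^ ((1:ℝ)/b) * q ^ ((1:ℝ)/b) with hrdef
  have hr0 : 0 < r := by positivity
  have hrb : a * r ^ b = t := by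
    rw [hrdef, Real.mul_rpow (by positivity) (by positivity),
        ← Real.rpow_mul (by positivity), ← Real.rpow_mul hq0.le,
        one_div_mul_cancel hb.ne', Real.rpow_one, Real.rpow_one, htdef, hqdef]
    field_simp
  have h2b : (0:ℝ) < (2:ℝ)^b := by positivity
  have h2b1 : (1:ℝ) ≤ (2:ℝ)^b := Real.one_le_rpow one_le_two hb.le
  have hrb2 : a * (r/2) ^ b = t / 2^b := by
    rw [Real.div_rpow hr0.le (by norm_num : (0:ℝ) ≤ 2), ← mul_div_assoc, hrb]
  have hball : ∀ c ∈ Xμ, ENNReal.ofReal t ≤ μ (ball c r) := by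
    intro c hc
    have h := hstd c hc r hr0
    rwa [hrb, min_eq_left ht1] at h
  have hball2 : ∀ c ∈ Xμ, ENNReal.ofReal (t / 2^b) ≤ μ (ball c (r/2)) := by
    intro c hc
    have h := hstd c hc (r/2) (by positivity)
    rwa [hrb2, min_eq_left (le_trans (div_le_self ht0.le h2b1) ht1)] at h
  obtain ⟨T, hTK, hTsep, hTcov⟩ := exists_maximal_separated Xμ hr0
  obtain ⟨F, hFT, hFcard⟩ := separated_finite_card μ (δ := t/2^b) (by positivity)
    hTsep (fun c hc => hball2 c (hTK hc))
  -- the per-center bad events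
  set A : M → Set (Fin n → M) := fun c => Set.pi Set.univ (fun _ => (ball c r)ᶜ) with hAdef
  have hAmeas : ∀ c : M, MeasurableSet (A c) :=
    fun c => MeasurableSet.univ_pi fun _ => measurableSet_ball.compl
  have hreal : (1 - t)^n ≤ 1/((n:ℝ)*n) := by
    have e1 : (1 - t) ≤ Real.exp (-t) := by nlinarith [Real.add_one_le_exp (-t)]
    have e2 : (1-t)^n ≤ Real.exp (-t)^n := pow_le_pow_left₀ (by linarith) e1 n
    have e3 : Real.exp (-t)^n = Real.exp (-(2*L)) := by
      rw [← Real.exp_nat_mul]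
      congr 1
      rw [htdef]
      field_simp
    have e4 : Real.exp (-(2*L)) = 1/((n:ℝ)*n) := by
      rw [Real.exp_neg, two_mul, Real.exp_add, hLdef, Real.exp_log hn0]
      rw [one_div]
    rw [e3, e4] at e2
    exact e2
  have hAval : ∀ c ∈ Xμ, ν (A c) ≤ ENNReal.ofReal (1/((n:ℝ)*n)) := by
    intro c hc
    have h1 : ν (A c) = (μ ((ball c r)ᶜ)) ^ n := by
      rw [hAdef, hν, Measure.pi_pi]
      simp
    have h2 : μ ((ball c r)ᶜ) ≤ ENNReal.ofReal (1 - t) := by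
      rw [measure_compl measurableSet_ball (measure_ne_top μ _), measure_univ]
      calc 1 - μ (ball c r) ≤ 1 - ENNReal.ofReal t := tsub_le_tsub_left (hball c hc) 1
        _ = ENNReal.ofReal (1 - t) := by
            rw [ENNReal.ofReal_sub _ ht0.le, ENNReal.ofReal_one]
    calc ν (A c) = (μ ((ball c r)ᶜ))^n := h1
      _ ≤ (ENNReal.ofReal (1-t))^n := pow_le_pow_left₀ (zero_le) h2 n
      _ = ENNReal.ofReal ((1-t)^n) := (ENNReal.ofReal_pow (by linarith) n).symm
      _ ≤ ENNReal.ofReal (1/((n:ℝ)*n)) := ENNReal.ofReal_le_ofReal hreal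
  set Good : Set (Fin n → M) :=
    (Set.pi Set.univ fun _ : Fin n => Xμ) ∩ (⋃ c ∈ F, A c)ᶜ with hGood
  have hGmeas : MeasurableSet Good :=
    (MeasurableSet.univ_pi fun _ => hXcl.measurableSet).inter
      (F.measurableSet_biUnion fun c _ => hAmeas c).compl
  have hcard_arith : (F.card : ℝ) * (1/((n:ℝ)*n)) ≤ (2:ℝ)^(b-1) / ((n:ℝ) * L) := by
    set c : ℝ := (F.card : ℝ) with hcdef
    have hc0 : 0 ≤ c := Nat.cast_nonneg _
    have hP : (2:ℝ)^(b-1) = (2:ℝ)^b / 2 := by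
      rw [Real.rpow_sub two_pos, Real.rpow_one]
    have h1 : c * t ≤ (2:ℝ)^b := by
      have h2 : c * (t/(2:ℝ)^b) * (2:ℝ)^b ≤ 1 * (2:ℝ)^b :=
        mul_le_mul_of_nonneg_right hFcard h2b.le
      calc c * t = c * (t/(2:ℝ)^b) * (2:ℝ)^b := by field_simp
        _ ≤ 1 * (2:ℝ)^b := h2
        _ = (2:ℝ)^b := one_mul _
    have h3 : c * (2*L) ≤ (2:ℝ)^b * n := by
      have h4 : c * t * n ≤ (2:ℝ)^b * n := mul_le_mul_of_nonneg_right h1 hn0.le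
      calc c * (2*L) = c * t * n := by rw [htdef]; field_simp
        _ ≤ (2:ℝ)^b * n := h4
    rw [hP, mul_one_div, div_le_div_iff₀ (by positivity) (by positivity)]
    nlinarith [mul_le_mul_of_nonneg_right h3 hn0.le]
  have hGc : ν Goodᶜ ≤ ENNReal.ofReal ((2:ℝ)^(b-1) / ((n:ℝ) * L)) := by
    have hXfull : ν (Set.pi Set.univ fun _ : Fin n => Xμ) = 1 := by
      rw [hν, Measure.pi_pi]; simp [hX1]
    have h0 : ν ((Set.pi Set.univ fun _ : Fin n => Xμ)ᶜ) = 0 := by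
      rw [measure_compl (MeasurableSet.univ_pi fun _ => hXcl.measurableSet)
        (measure_ne_top _ _), hXfull, measure_univ, tsub_self]
    have hub : ν (⋃ c ∈ F, A c) ≤ (F.card : ℝ≥0∞) * ENNReal.ofReal (1/((n:ℝ)*n)) := by
      calc ν (⋃ c ∈ F, A c) ≤ ∑ c ∈ F, ν (A c) := measure_biUnion_finset_le F A
        _ ≤ ∑ _c ∈ F, ENNReal.ofReal (1/((n:ℝ)*n)) :=
            Finset.sum_le_sum (fun c hc => hAval c (hTK (hFT ▸ hc)))
        _ = (F.card : ℝ≥0∞) * ENNReal.ofReal (1/((n:ℝ)*n)) := by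
            rw [Finset.sum_const, nsmul_eq_mul]
    have hGoodc : Goodᶜ = (Set.pi Set.univ fun _ : Fin n => Xμ)ᶜ ∪ (⋃ c ∈ F, A c) := by
      rw [hGood, Set.compl_inter, compl_compl]
    calc ν Goodᶜ ≤ ν ((Set.pi Set.univ fun _ : Fin n => Xμ)ᶜ) + ν (⋃ c ∈ F, A c) := by
          rw [hGoodc]; exact measure_union_le _ _
      _ = ν (⋃ c ∈ F, A c) := by rw [h0, zero_add]
      _ ≤ (F.card : ℝ≥0∞) * ENNReal.ofReal (1/((n:ℝ)*n)) := hub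
      _ = ENNReal.ofReal ((F.card : ℝ) * (1/((n:ℝ)*n))) := by
          rw [← ENNReal.ofReal_natCast F.card, ← ENNReal.ofReal_mul (Nat.cast_nonneg _)]
      _ ≤ ENNReal.ofReal ((2:ℝ)^(b-1) / ((n:ℝ) * L)) :=
          ENNReal.ofReal_le_ofReal hcard_arith
  -- the good event implies the Hausdorff distance bound
  have hε2r : 2 * (2 / a) ^ ((1:ℝ)/b) * q ^ ((1:ℝ)/b) = 2*r := by
    rw [hrdef]; ring
  have hsub : Good ⊆ {ω : Fin n → M |
      hausdorffDist Xμ (Set.range ω) ≤ 2 * (2 / a) ^ ((1:ℝ)/b) * q ^ ((1:ℝ)/b)} := by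
    rintro ω ⟨hω1, hω2⟩
    have hω1' : ∀ i, ω i ∈ Xμ := fun i => hω1 i (Set.mem_univ i)
    have hω2' : ∀ c ∈ F, ∃ i, ω i ∈ ball c r := by
      intro c hc
      have : ω ∉ A c := fun h => hω2 (Set.mem_biUnion hc h)
      rw [hAdef] at this
      simp only [Set.mem_pi, Set.mem_univ, forall_true_left, Set.mem_compl_iff, not_forall,
        not_not] at this
      obtain ⟨i, hi⟩ := this
      exact ⟨i, by simpa using hi⟩
    show hausdorffDist Xμ (Set.range ω) ≤ 2 * (2 / a) ^ ((1:ℝ)/b) * q ^ ((1:ℝ)/b)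
    rw [hε2r]
    apply hausdorffDist_le_of_mem_dist (by positivity)
    · intro x hx
      obtain ⟨c, hcT, hdxc⟩ := hTcov x hx
      obtain ⟨i, hi⟩ := hω2' c (by rw [← Finset.mem_coe, hFT]; exact hcT)
      refine ⟨ω i, Set.mem_range_self i, ?_⟩
      have h5 : dist (ω i) c < r := mem_ball.1 hi
      calc dist x (ω i) ≤ dist x c + dist c (ω i) := dist_triangle _ _ _
        _ ≤ r + r := by rw [dist_comm c (ω i)]; linarith
        _ = 2 * r := by ring
    · rintro y ⟨i, rfl⟩
      exact ⟨ω i, hω1' i, by rw [dist_self]; positivity⟩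
  -- conclude
  by_cases hδ1 : (1:ℝ) ≤ (2:ℝ)^(b-1) / ((n:ℝ) * L)
  · exact le_trans (by linarith) ENNReal.toReal_nonneg
  push_neg at hδ1
  have hδpos : (0:ℝ) < (2:ℝ)^(b-1) / ((n:ℝ) * L) := by positivity
  have hGlb : ENNReal.ofReal (1 - (2:ℝ)^(b-1) / ((n:ℝ) * L)) ≤ ν Good := by
    have hcompl : ν Good + ν Goodᶜ = 1 := by
      rw [measure_add_measure_compl hGmeas, measure_univ]
    rw [ENNReal.ofReal_sub _ hδpos.le, ENNReal.ofReal_one]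
    refine tsub_le_iff_right.2 ?_
    calc (1:ℝ≥0∞) = ν Good + ν Goodᶜ := hcompl.symm
      _ ≤ ν Good + ENNReal.ofReal ((2:ℝ)^(b-1) / ((n:ℝ) * L)) := add_le_add le_rfl hGc
  calc 1 - (2:ℝ)^(b-1) / ((n:ℝ) * L)
      = (ENNReal.ofReal (1 - (2:ℝ)^(b-1) / ((n:ℝ) * L))).toReal :=
        (ENNReal.toReal_ofReal (by linarith)).symm
    _ ≤ (ν Good).toReal := ENNReal.toReal_mono (measure_ne_top ν _) hGlb
    _ ≤ _ := ENNReal.toReal_mono (measure_ne_top ν _) (measure_mono hsub)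
end

section
/- Let (M,ρ) be a metric space and let μ be a Borel probability measure on M whose support X_μ is compact and nonempty and which satisfies the (a,b)-standard assumption for some a>0, b>0. Let X₁,…,Xₙ (n ≥ 1) be i.i.d. with law μ and let X̂ₙ = {X₁,…,Xₙ}, regarded as a compact metric space with the metric induced by ρ. Then for every ε>0, ℙ( d_GH(X_μ, X̂ₙ) > 2ε ) ≤ min( (2^b/(a ε^b))·exp(−n a ε^b), 1 ), where d_GH denotes the Gromov–Hausdorff distance between the compact metric spaces (X_μ,ρ) and (X̂ₙ,ρ). -/
open MeasureTheory Metric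
open scoped ENNReal

/-- The Gromov–Hausdorff distance between two nonempty compact subsets of a metric space,
each regarded as a compact metric space with the induced metric. -/
noncomputable def ghDistSet {M : Type*} [MetricSpace M] (A B : Set M)
    (hA : IsCompact A) (hB : IsCompact B) (hA' : A.Nonempty) (hB' : B.Nonempty) : ℝ :=
  haveI : CompactSpace A := isCompact_iff_compactSpace.mp hA
  haveI : CompactSpace B := isCompact_iff_compactSpace.mp hB
  haveI : Nonempty A := hA'.to_subtype
  haveI : Nonempty B := hB'.to_subtype
  GromovHausdorff.ghDist A B

/-- The Gromov–Hausdorff distance between two compact subsets of a common metric space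
is at most their Hausdorff distance. -/
lemma ghDistSet_le_hausdorffDist {M : Type*} [MetricSpace M] (A B : Set M)
    (hA : IsCompact A) (hB : IsCompact B) (hA' : A.Nonempty) (hB' : B.Nonempty) :
    ghDistSet A B hA hB hA' hB' ≤ hausdorffDist A B := by
  haveI : CompactSpace A := isCompact_iff_compactSpace.mp hA
  haveI : CompactSpace B := isCompact_iff_compactSpace.mp hB
  haveI : Nonempty A := hA'.to_subtype
  haveI : Nonempty B := hB'.to_subtype
  have h := GromovHausdorff.ghDist_le_hausdorffDist
    (isometry_subtype_coe : Isometry ((↑) : A → M))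
    (isometry_subtype_coe : Isometry ((↑) : B → M))
  rw [Subtype.range_coe, Subtype.range_coe] at h
  exact h

/-- Cardinality bound for an `ε`-separated subset of a set on which all balls of radius
`ε/2` have `μ`-measure at least `m`. -/
lemma sep_card_bound {M : Type*} [MetricSpace M] [MeasurableSpace M] [BorelSpace M]
    (μ : Measure M) [IsProbabilityMeasure μ] {X : Set M} {ε m : ℝ} (hε : 0 < ε)
    (hm : 0 ≤ m) (hball : ∀ x ∈ X, ENNReal.ofReal m ≤ μ (ball x (ε / 2)))
    (Y : Finset M) (hYX : ↑Y ⊆ X)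
    (hsep : ∀ y ∈ Y, ∀ z ∈ Y, y ≠ z → ε ≤ dist y z) :
    (Y.card : ℝ) * m ≤ 1 := by
  have hdisj : (↑Y : Set M).PairwiseDisjoint (fun y => ball y (ε / 2)) := by
    intro y hy z hz hyz
    apply Set.disjoint_left.mpr
    intro x hxy hxz
    have h1 : dist x y < ε / 2 := mem_ball.mp hxy
    have h2 : dist x z < ε / 2 := mem_ball.mp hxz
    have h3 : ε ≤ dist y z := hsep y hy z hz hyz
    have h4 : dist y z ≤ dist y x + dist x z := dist_triangle _ _ _
    rw [dist_comm y x] at h4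
    linarith
  have hmeas : ∀ y ∈ Y, MeasurableSet (ball y (ε / 2)) := fun y _ =>
    measurableSet_ball
  have hsum : μ (⋃ y ∈ Y, ball y (ε / 2)) = ∑ y ∈ Y, μ (ball y (ε / 2)) :=
    measure_biUnion_finset hdisj hmeas
  have hle1 : μ (⋃ y ∈ Y, ball y (ε / 2)) ≤ 1 := prob_le_one
  have hlow : (Y.card : ℝ≥0∞) * ENNReal.ofReal m ≤ ∑ y ∈ Y, μ (ball y (ε / 2)) := by
    calc (Y.card : ℝ≥0∞) * ENNReal.ofReal m = ∑ _y ∈ Y, ENNReal.ofReal m := by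
          rw [Finset.sum_const, nsmul_eq_mul]
      _ ≤ ∑ y ∈ Y, μ (ball y (ε / 2)) :=
          Finset.sum_le_sum fun y hy => hball y (hYX hy)
  have key : ENNReal.ofReal ((Y.card : ℝ) * m) ≤ ENNReal.ofReal 1 := by
    rw [ENNReal.ofReal_mul (by positivity), ENNReal.ofReal_natCast,
      ENNReal.ofReal_one]
    exact le_trans hlow (hsum ▸ hle1)
  have := (ENNReal.ofReal_le_ofReal_iff (by norm_num)).mp key
  exact this

/-- Existence of a maximal `ε`-separated subset of `X`, which then covers `X`
by balls of radius `ε`. -/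
lemma exists_maximal_sep {M : Type*} [MetricSpace M] [MeasurableSpace M] [BorelSpace M]
    (μ : Measure M) [IsProbabilityMeasure μ] {X : Set M} {ε m : ℝ} (hε : 0 < ε)
    (hm : 0 < m) (hball : ∀ x ∈ X, ENNReal.ofReal m ≤ μ (ball x (ε / 2))) :
    ∃ Y : Finset M, ↑Y ⊆ X ∧ (∀ y ∈ Y, ∀ z ∈ Y, y ≠ z → ε ≤ dist y z) ∧
      (Y.card : ℝ) * m ≤ 1 ∧ X ⊆ ⋃ y ∈ Y, ball y ε := by
  classical
  set S : Set ℕ := {k | ∃ Y : Finset M, ↑Y ⊆ X ∧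
    (∀ y ∈ Y, ∀ z ∈ Y, y ≠ z → ε ≤ dist y z) ∧ Y.card = k} with hS
  have hS0 : 0 ∈ S := ⟨∅, by simp, by simp, by simp⟩
  have hbdd : BddAbove S := by
    refine ⟨⌈1 / m⌉₊, fun k hk => ?_⟩
    obtain ⟨Y, hYX, hsep, hcard⟩ := hk
    have h1 : (Y.card : ℝ) * m ≤ 1 := sep_card_bound μ hε hm.le hball Y hYX hsep
    have h2 : (k : ℝ) ≤ 1 / m := by
      rw [le_div_iff₀ hm]
      rwa [hcard] at h1
    exact_mod_cast h2.trans (Nat.le_ceil _)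
  have hmem : sSup S ∈ S := Nat.sSup_mem ⟨0, hS0⟩ hbdd
  obtain ⟨Y, hYX, hsep, hcard⟩ := hmem
  refine ⟨Y, hYX, hsep, sep_card_bound μ hε hm.le hball Y hYX hsep, ?_⟩
  intro x hx
  by_contra hxc
  simp only [Set.mem_iUnion, mem_ball, not_exists] at hxc
  have hxY : x ∉ Y := by
    intro hxY
    exact hxc x hxY (by simpa using hε)
  have hxc' : ∀ y ∈ Y, ε ≤ dist x y := fun y hy => not_lt.mp (hxc y hy)
  have hsep' : ∀ y ∈ insert x Y, ∀ z ∈ insert x Y, y ≠ z → ε ≤ dist y z := by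
    intro y hy z hz hyz
    rcases Finset.mem_insert.mp hy with hy1 | hy'
    · subst hy1
      rcases Finset.mem_insert.mp hz with hz1 | hz'
      · exact absurd hz1.symm hyz
      · exact hxc' z hz'
    · rcases Finset.mem_insert.mp hz with hz1 | hz'
      · subst hz1
        rw [dist_comm]
        exact hxc' y hy'
      · exact hsep y hy' z hz' hyz
  have hmemS : Y.card + 1 ∈ S := by
    refine ⟨insert x Y, ?_, hsep', ?_⟩
    · intro y hy
      rcases Finset.mem_coe.mp hy with hy
      rcases Finset.mem_insert.mp hy with rfl | hy'
      · exact hx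
      · exact hYX hy'
    · rw [Finset.card_insert_of_notMem hxY]
  have := le_csSup hbdd hmemS
  omega

/-- If `μ` is a Borel probability measure on a metric space `M` whose
support `Xμ` (the smallest closed set of full measure) is compact and nonempty and which
satisfies the `(a,b)`-standard assumption, and `X̂ₙ = {X₁,…,Xₙ}` (`n ≥ 1`) with
`X₁,…,Xₙ` i.i.d. of law `μ` (modelled by the product measure on `Fin n → M`), regarded
as a compact metric space with the induced metric, then for every `ε > 0`,
`ℙ(d_GH(Xμ, X̂ₙ) > 2ε) ≤ min((2^b/(a εᵇ)) exp(-n a εᵇ), 1)`. -/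
theorem stmt_3 {M : Type*} [MetricSpace M] [MeasurableSpace M] [BorelSpace M]
    (μ : Measure M) [IsProbabilityMeasure μ]
    (Xμ : Set M) (hXclosed : IsClosed Xμ) (hXfull : μ Xμ = 1)
    (hXmin : ∀ F : Set M, IsClosed F → μ F = 1 → Xμ ⊆ F)
    (hXcpt : IsCompact Xμ) (hXne : Xμ.Nonempty)
    (a b : ℝ) (ha : 0 < a) (hb : 0 < b)
    (hstd : ∀ x ∈ Xμ, ∀ r : ℝ, 0 < r →
      ENNReal.ofReal (min (a * r ^ b) 1) ≤ μ (ball x r))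
    (n : ℕ) (hn : 0 < n) (ε : ℝ) (hε : 0 < ε) :
    (Measure.pi fun _ : Fin n => μ)
        {ω : Fin n → M |
          2 * ε < ghDistSet Xμ (Set.range ω) hXcpt
            (Set.finite_range ω).isCompact hXne ⟨ω ⟨0, hn⟩, Set.mem_range_self _⟩}
      ≤ ENNReal.ofReal
          (min ((2 ^ b / (a * ε ^ b)) * Real.exp (-(n * a * ε ^ b))) 1) := by
  classical
  set P := Measure.pi fun _ : Fin n => μ with hP
  set E := {ω : Fin n → M |
      2 * ε < ghDistSet Xμ (Set.range ω) hXcpt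
        (Set.finite_range ω).isCompact hXne ⟨ω ⟨0, hn⟩, Set.mem_range_self _⟩} with hE
  -- the standard assumption for radius `ε/2`
  have hεb : (0:ℝ) < a * ε ^ b := by positivity
  have hε2b : (0:ℝ) < min (a * (ε / 2) ^ b) 1 := lt_min (by positivity) one_pos
  have hball : ∀ x ∈ Xμ, ENNReal.ofReal (min (a * (ε / 2) ^ b) 1) ≤ μ (ball x (ε / 2)) :=
    fun x hx => hstd x hx (ε / 2) (by positivity)
  obtain ⟨Y, hYX, hsep, hYcard, hcover⟩ := exists_maximal_sep μ hε hε2b hball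
  -- the covering event
  set A : Set (Fin n → M) := ⋃ i : Fin n, Function.eval i ⁻¹' Xμᶜ with hA
  set B : Set (Fin n → M) := ⋃ y ∈ Y, {ω : Fin n → M | ∀ i, ω i ∉ ball y ε} with hB
  have hEAB : E ⊆ A ∪ B := by
    intro ω hω
    by_contra hnot
    rw [Set.mem_union, not_or] at hnot
    obtain ⟨hnA, hnB⟩ := hnot
    simp only [hA, Set.mem_iUnion, not_exists, Set.mem_preimage, Set.mem_compl_iff,
      not_not, Function.eval] at hnA
    simp only [hB, Set.mem_iUnion, not_exists, Set.mem_setOf_eq, not_forall, not_not] at hnB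
    -- every point of range ω lies in Xμ
    have hrange : Set.range ω ⊆ Xμ := by
      rintro _ ⟨i, rfl⟩; exact hnA i
    -- Hausdorff distance bound
    have hH : hausdorffDist Xμ (Set.range ω) ≤ 2 * ε := by
      apply hausdorffDist_le_of_mem_dist (by positivity)
      · intro x hx
        have := hcover hx
        simp only [Set.mem_iUnion, mem_ball] at this
        obtain ⟨y, hyY, hxy⟩ := this
        obtain ⟨i, hi⟩ := hnB y hyY
        refine ⟨ω i, Set.mem_range_self i, ?_⟩
        have h1 : dist x (ω i) ≤ dist x y + dist (ω i) y := by
          rw [dist_comm (ω i) y]; exact dist_triangle _ _ _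
        have h2 : dist (ω i) y < ε := mem_ball.mp hi
        linarith
      · intro z hz
        exact ⟨z, hrange hz, by rw [dist_self]; positivity⟩
    have hgh := ghDistSet_le_hausdorffDist Xμ (Set.range ω) hXcpt
      (Set.finite_range ω).isCompact hXne ⟨ω ⟨0, hn⟩, Set.mem_range_self _⟩
    have : 2 * ε < 2 * ε := lt_of_lt_of_le hω (hgh.trans hH)
    exact lt_irrefl _ this
  -- measure of A is zero
  have hAnull : P A = 0 := by
    refine le_antisymm (le_trans (measure_iUnion_le _) ?_) zero_le
    have h0 : ∀ i : Fin n, P (Function.eval i ⁻¹' Xμᶜ) = 0 := by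
      intro i
      apply Measure.pi_eval_preimage_null
      rw [measure_compl hXclosed.measurableSet (measure_ne_top μ _), hXfull,
        measure_univ, tsub_self]
    simp only [h0, tsum_zero, le_refl]
  -- measure of each bad event
  have hballε : ∀ y ∈ Y, ENNReal.ofReal (min (a * ε ^ b) 1) ≤ μ (ball y ε) :=
    fun y hy => hstd y (hYX hy) ε hε
  set c : ℝ≥0∞ := 1 - ENNReal.ofReal (min (a * ε ^ b) 1) with hc
  have hterm : ∀ y ∈ Y, P {ω : Fin n → M | ∀ i, ω i ∉ ball y ε} ≤ c ^ n := by
    intro y hy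
    have hset : {ω : Fin n → M | ∀ i, ω i ∉ ball y ε} =
        Set.pi Set.univ (fun _ : Fin n => (ball y ε)ᶜ) := by
      ext ω; simp [Set.mem_pi]
    rw [hset, hP, Measure.pi_pi]
    have hcompl : μ (ball y ε)ᶜ ≤ c := by
      rw [measure_compl measurableSet_ball (measure_ne_top μ _), measure_univ, hc]
      exact tsub_le_tsub_left (hballε y hy) 1
    calc ∏ _i : Fin n, μ (ball y ε)ᶜ = μ (ball y ε)ᶜ ^ n := by
          rw [Finset.prod_const, Finset.card_univ, Fintype.card_fin]
      _ ≤ c ^ n := pow_le_pow_left' hcompl n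
  have hBle : P B ≤ (Y.card : ℝ≥0∞) * c ^ n := by
    calc P B ≤ ∑ y ∈ Y, P {ω : Fin n → M | ∀ i, ω i ∉ ball y ε} :=
          measure_biUnion_finset_le Y _
      _ ≤ ∑ _y ∈ Y, c ^ n := Finset.sum_le_sum hterm
      _ = (Y.card : ℝ≥0∞) * c ^ n := by rw [Finset.sum_const, nsmul_eq_mul]
  -- key bound
  have key : P E ≤ ENNReal.ofReal ((2 ^ b / (a * ε ^ b)) * Real.exp (-(n * a * ε ^ b))) := by
    have hPE : P E ≤ (Y.card : ℝ≥0∞) * c ^ n := by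
      calc P E ≤ P (A ∪ B) := measure_mono hEAB
        _ ≤ P A + P B := measure_union_le _ _
        _ = P B := by rw [hAnull, zero_add]
        _ ≤ _ := hBle
    rcases le_or_gt 1 (a * ε ^ b) with h1 | h1
    · -- the ball of radius ε has full measure, so the bad events are null
      have hc0 : c = 0 := by
        rw [hc, min_eq_right h1, ENNReal.ofReal_one, tsub_self]
      have : P E ≤ 0 := by
        simpa [hc0, zero_pow hn.ne'] using hPE
      exact le_trans this zero_le
    · -- the main estimate
      have hmin : min (a * ε ^ b) 1 = a * ε ^ b := min_eq_left h1.le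
      have h2b : (1:ℝ) ≤ 2 ^ b := by
        rw [show (1:ℝ) = 2 ^ (0:ℝ) by simp]
        exact Real.rpow_le_rpow_of_exponent_le (by norm_num) hb.le
      have h2bpos : (0:ℝ) < 2 ^ b := by positivity
      -- the radius-(ε/2) quantity
      have hhalf : (ε / 2) ^ b = ε ^ b / 2 ^ b := Real.div_rpow hε.le (by norm_num : (0:ℝ) ≤ 2) b
      have hsmall : a * (ε / 2) ^ b ≤ a * ε ^ b := by
        rw [hhalf]
        have : ε ^ b / 2 ^ b ≤ ε ^ b := by
          rw [div_le_iff₀ h2bpos]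
          nlinarith [Real.rpow_nonneg hε.le b]
        nlinarith
      have hmin2 : min (a * (ε / 2) ^ b) 1 = a * (ε / 2) ^ b :=
        min_eq_left (hsmall.trans h1.le)
      -- cardinality bound
      have hcard : (Y.card : ℝ) ≤ 2 ^ b / (a * ε ^ b) := by
        rw [hmin2, hhalf] at hYcard
        have hpos : (0:ℝ) < a * (ε ^ b / 2 ^ b) := by positivity
        rw [div_eq_mul_inv, ← one_div]
        calc (Y.card : ℝ) ≤ 1 / (a * (ε ^ b / 2 ^ b)) := by
              rw [le_div_iff₀ hpos]; exact hYcard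
          _ = 2 ^ b * (1 / (a * ε ^ b)) := by field_simp
      -- exponential bound
      have hexp : (1 - a * ε ^ b) ^ n ≤ Real.exp (-(n * a * ε ^ b)) := by
        have h3 : 1 - a * ε ^ b ≤ Real.exp (-(a * ε ^ b)) := by
          have := Real.add_one_le_exp (-(a * ε ^ b))
          linarith
        have h4 : (1 - a * ε ^ b) ^ n ≤ Real.exp (-(a * ε ^ b)) ^ n :=
          pow_le_pow_left₀ (by linarith) h3 n
        rwa [← Real.exp_nat_mul, mul_neg, ← neg_mul, neg_mul_comm,
          show (n:ℝ) * -(a * ε ^ b) = -(n * a * ε ^ b) by ring] at h4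
      -- put things together
      have hcc : c = ENNReal.ofReal (1 - a * ε ^ b) := by
        rw [hc, hmin, ENNReal.ofReal_sub _ (by positivity), ENNReal.ofReal_one]
      have hfin : (Y.card : ℝ≥0∞) * c ^ n =
          ENNReal.ofReal ((Y.card : ℝ) * (1 - a * ε ^ b) ^ n) := by
        rw [hcc, ← ENNReal.ofReal_pow (by linarith), ← ENNReal.ofReal_natCast Y.card,
          ← ENNReal.ofReal_mul (by positivity)]
      refine hPE.trans ?_
      rw [hfin]
      apply ENNReal.ofReal_le_ofReal
      have hnn : (0:ℝ) ≤ (1 - a * ε ^ b) ^ n := pow_nonneg (by linarith) n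
      calc (Y.card : ℝ) * (1 - a * ε ^ b) ^ n
          ≤ (2 ^ b / (a * ε ^ b)) * (1 - a * ε ^ b) ^ n :=
            mul_le_mul_of_nonneg_right hcard hnn
        _ ≤ (2 ^ b / (a * ε ^ b)) * Real.exp (-(n * a * ε ^ b)) :=
            mul_le_mul_of_nonneg_left hexp (by positivity)
  -- conclude with the minimum
  rcases min_cases ((2 ^ b / (a * ε ^ b)) * Real.exp (-(n * a * ε ^ b))) (1:ℝ) with
    ⟨hmin, _⟩ | ⟨hmin, _⟩
  · rw [hmin]; exact key
  · rw [hmin, ENNReal.ofReal_one]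
    exact prob_le_one
end

section
/- Let (M,ρ) be a metric space and let a>0, b>0. There exists a constant C > 0 depending only on a and b (not on M) such that for every n ≥ 2 and every Borel probability measure μ on M with compact support X_μ satisfying the (a,b)-standard assumption, if X₁,…,Xₙ are i.i.d. with law μ and X̂ₙ = {X₁,…,Xₙ}, then 𝔼[ d_H(X_μ, X̂ₙ) ] ≤ C (log n / n)^{1/b}. -/
open MeasureTheory Metric
open scoped ENNReal
set_option maxHeartbeats 1000000


private lemma sep_card_bound_s4 {M : Type} [MetricSpace M] [MeasurableSpace M] [BorelSpace M]
    (μ : Measure M) [IsProbabilityMeasure μ] (Xμ : Set M) {a b : ℝ}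
    (hstd : ∀ x ∈ Xμ, ∀ r : ℝ, 0 < r →
      ENNReal.ofReal (min (a * r ^ b) 1) ≤ μ (ball x r))
    {t : ℝ} (ht : 0 < t) (s : Finset M) (hs : ↑s ⊆ Xμ)
    (hsep : ∀ y ∈ s, ∀ z ∈ s, y ≠ z → t / 2 ≤ dist y z) :
    (s.card : ℝ≥0∞) * ENNReal.ofReal (min (a * (t / 4) ^ b) 1) ≤ 1 := by
  have hdisj : (↑s : Set M).PairwiseDisjoint (fun y => ball y (t / 4)) := by
    intro y hy z hz hyz
    apply Set.disjoint_left.mpr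
    intro w hw hw'
    have h1 : dist y z ≤ dist y w + dist w z := dist_triangle y w z
    have h2 := hsep y hy z hz hyz
    have hw1 : dist w y < t / 4 := mem_ball.mp hw
    have hw2 : dist w z < t / 4 := mem_ball.mp hw'
    rw [dist_comm w y] at hw1
    linarith
  calc (s.card : ℝ≥0∞) * ENNReal.ofReal (min (a * (t / 4) ^ b) 1)
      = ∑ _y ∈ s, ENNReal.ofReal (min (a * (t / 4) ^ b) 1) := by
        simp [Finset.sum_const, mul_comm]
    _ ≤ ∑ y ∈ s, μ (ball y (t / 4)) :=
        Finset.sum_le_sum fun y hy => hstd y (hs hy) _ (by linarith)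
    _ = μ (⋃ y ∈ s, ball y (t / 4)) :=
        (measure_biUnion_finset hdisj fun y _ => measurableSet_ball).symm
    _ ≤ 1 := prob_le_one
private lemma net_exists {M : Type} [MetricSpace M] [MeasurableSpace M] [BorelSpace M]
    (μ : Measure M) [IsProbabilityMeasure μ] (Xμ : Set M) {a b : ℝ} (ha : 0 < a) (hb : 0 < b)
    (hstd : ∀ x ∈ Xμ, ∀ r : ℝ, 0 < r →
      ENNReal.ofReal (min (a * r ^ b) 1) ≤ μ (ball x r))
    {t : ℝ} (ht : 0 < t) :
    ∃ s : Finset M, ↑s ⊆ Xμ ∧ (∀ x ∈ Xμ, ∃ y ∈ s, dist x y < t / 2) ∧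
      (s.card : ℝ≥0∞) * ENNReal.ofReal (min (a * (t / 4) ^ b) 1) ≤ 1 := by
  classical
  set p : ℝ := min (a * (t / 4) ^ b) 1 with hp
  have hp0 : 0 < p :=
    lt_min (mul_pos ha (Real.rpow_pos_of_pos (by linarith) b)) one_pos
  set Q : Set ℕ := {k | ∃ s : Finset M, ↑s ⊆ Xμ ∧
    (∀ y ∈ s, ∀ z ∈ s, y ≠ z → t / 2 ≤ dist y z) ∧ s.card = k} with hQ
  have hQ0 : 0 ∈ Q := ⟨∅, by simp, by simp, by simp⟩
  have hbdd : BddAbove Q := by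
    refine ⟨Nat.ceil (1 / p), fun k hk => ?_⟩
    obtain ⟨s, hs, hsep, hcard⟩ := hk
    have h1 := sep_card_bound_s4 μ Xμ hstd ht s hs hsep
    have h2 : (s.card : ℝ) * p ≤ 1 := by
      have h3 := ENNReal.toReal_mono (by norm_num) h1
      rw [ENNReal.toReal_mul, ENNReal.toReal_ofReal hp0.le] at h3
      simpa using h3
    have h4 : (k : ℝ) ≤ 1 / p := by
      rw [← hcard, le_div_iff₀ hp0]; exact h2
    exact_mod_cast h4.trans (Nat.le_ceil _)
  obtain ⟨s, hs, hsep, hcard⟩ := Nat.sSup_mem ⟨0, hQ0⟩ hbdd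
  refine ⟨s, hs, ?_, sep_card_bound_s4 μ Xμ hstd ht s hs hsep⟩
  intro x hx
  by_contra hcon
  push_neg at hcon
  have hxs : x ∉ s := by
    intro hxs
    have := hcon x hxs
    simp only [dist_self] at this
    linarith
  have hins : s.card + 1 ∈ Q := by
    refine ⟨insert x s, ?_, ?_, ?_⟩
    · rw [Finset.coe_insert]
      exact Set.insert_subset_iff.mpr ⟨hx, hs⟩
    · intro y hy z hz hyz
      rcases Finset.mem_insert.mp hy with rfl | hy'
      · rcases Finset.mem_insert.mp hz with rfl | hz'
        · exact absurd rfl hyz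
        · exact hcon z hz'
      · rcases Finset.mem_insert.mp hz with rfl | hz'
        · rw [dist_comm]; exact hcon y hy'
        · exact hsep y hy' z hz' hyz
    · rw [Finset.card_insert_of_notMem hxs]
  have := le_csSup hbdd hins
  omega


private lemma diam_bound' {M : Type} [MetricSpace M] [MeasurableSpace M] [BorelSpace M]
    (μ : Measure M) [IsProbabilityMeasure μ] (Xμ : Set M)
    (hXmin : ∀ F : Set M, IsClosed F → μ F = 1 → Xμ ⊆ F) {a b : ℝ} (ha : 0 < a) (hb : 0 < b)
    (hstd : ∀ x ∈ Xμ, ∀ r : ℝ, 0 < r →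
      ENNReal.ofReal (min (a * r ^ b) 1) ≤ μ (ball x r)) :
    ∀ x ∈ Xμ, ∀ z ∈ Xμ, dist x z ≤ (1 / a) ^ (1 / b : ℝ) := by
  intro x hx z hz
  set r₀ : ℝ := (1 / a) ^ (1 / b : ℝ) with hr₀
  have hr₀pos : 0 < r₀ := Real.rpow_pos_of_pos (by positivity) _
  have hr₀b : a * r₀ ^ b = 1 := by
    rw [hr₀, ← Real.rpow_mul (by positivity : (0:ℝ) ≤ 1 / a),
      one_div_mul_cancel hb.ne', Real.rpow_one]
    field_simp
  have hball : μ (ball x r₀) = 1 := by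
    refine le_antisymm prob_le_one ?_
    have := hstd x hx r₀ hr₀pos
    rwa [hr₀b, min_self, ENNReal.ofReal_one] at this
  have hcball : μ (closedBall x r₀) = 1 :=
    le_antisymm prob_le_one (hball ▸ measure_mono ball_subset_closedBall)
  have hsub : Xμ ⊆ closedBall x r₀ := hXmin _ isClosed_closedBall hcball
  have := hsub hz
  rw [mem_closedBall] at this
  rwa [dist_comm]


private lemma real_endgame (b r₀ c2 L K C t0 p p4 : ℝ) (n : ℕ) (hn : 2 ≤ n)
    (hb : 0 < b) (hr₀ : 0 < r₀) (hc2 : 0 < c2) (hK : 0 < K)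
    (hL2 : Real.log 2 ≤ L) (hLn : L = Real.log n)
    (hp : p = min ((2 + 1 / b) * L / n) 1)
    (hp4 : p4 = min ((2 + 1 / b) * L / (c2 * n)) 1)
    (ht0 : t0 = (K * L / n) ^ (1 / b : ℝ))
    (hC : C = K ^ (1 / b : ℝ) + r₀ * (c2 + 1) * (1 / Real.log 2) ^ (1 / b : ℝ)) :
    t0 + r₀ * (1 / p4 * (1 - p) ^ n) ≤ C * (L / n) ^ (1 / b : ℝ) := by
  have hn1 : (1 : ℝ) ≤ n := by exact_mod_cast Nat.one_le_of_lt hn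
  have hnpos : (0 : ℝ) < n := by linarith
  have hlog2 : 0 < Real.log 2 := Real.log_pos one_lt_two
  have hLpos : 0 < L := lt_of_lt_of_le hlog2 hL2
  have h1b : (0 : ℝ) < 1 / b := by positivity
  have hβ : (0 : ℝ) < 2 + 1 / b := by positivity
  set β : ℝ := 2 + 1 / b with hβdef
  have h2β : (2 : ℝ) ≤ β := by rw [hβdef]; linarith
  have hLn0 : (0 : ℝ) ≤ L / n := by positivity
  have ht0eq : t0 = K ^ (1 / b : ℝ) * (L / n) ^ (1 / b : ℝ) := by
    rw [ht0, mul_div_assoc, Real.mul_rpow hK.le hLn0]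
  have hp1 : p ≤ 1 := hp ▸ min_le_right _ _
  have hfin2 : 0 ≤ (1 / Real.log 2) ^ (1 / b : ℝ) := by positivity
  by_cases hcase : β * L / n < 1
  · have hpeq : p = β * L / n := by rw [hp, min_eq_left hcase.le]
    have hq1 : (1 - p) ^ n ≤ Real.exp (-p) ^ n :=
      pow_le_pow_left₀ (by linarith) (by linarith [Real.add_one_le_exp (-p)]) n
    have hq2 : Real.exp (-p) ^ n = Real.exp (-(β * L)) := by
      rw [← Real.exp_nat_mul]
      congr 1
      rw [hpeq]
      field_simp
    have hq3 : Real.exp (-(β * L)) = (n : ℝ) ^ (-β) := by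
      rw [hLn, Real.rpow_def_of_pos hnpos]
      congr 1
      ring
    have hq4 : (1 - p) ^ n ≤ (n : ℝ) ^ (-β) := by
      rw [← hq3, ← hq2]; exact hq1
    have hq0 : 0 ≤ (1 - p) ^ n := pow_nonneg (by linarith) n
    have hβL1 : (1 : ℝ) ≤ β * L := by
      nlinarith [Real.log_two_gt_d9]
    have h1p4 : 1 / p4 ≤ (c2 + 1) * n := by
      rw [hp4]
      rcases min_cases ((2 + 1 / b) * L / (c2 * n)) 1 with ⟨h, hle⟩ | ⟨h, hlt⟩
      · rw [h]
        have he : 1 / ((2 + 1 / b) * L / (c2 * n)) = c2 * n / (β * L) := by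
          rw [hβdef]
          field_simp
        rw [he]
        have h2 : c2 * n / (β * L) ≤ c2 * n := div_le_self (by positivity) hβL1
        nlinarith
      · rw [h]
        norm_num
        nlinarith [hc2, hn1]
    have hstep : 1 / p4 * (1 - p) ^ n ≤ (c2 + 1) * ((n : ℝ) * (n : ℝ) ^ (-β)) := by
      have h5 := mul_le_mul h1p4 hq4 hq0 (by positivity)
      calc 1 / p4 * (1 - p) ^ n ≤ (c2 + 1) * n * ((n : ℝ) ^ (-β)) := h5
        _ = (c2 + 1) * ((n : ℝ) * (n : ℝ) ^ (-β)) := by ring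
    have hnn : (n : ℝ) * (n : ℝ) ^ (-β) = (n : ℝ) ^ (1 - β) := by
      nth_rewrite 1 [← Real.rpow_one (n : ℝ)]
      rw [← Real.rpow_add hnpos]
      ring_nf
    have h1β : (n : ℝ) ^ (1 - β : ℝ) ≤ (n : ℝ) ^ (-(1 / b) : ℝ) := by
      apply Real.rpow_le_rpow_of_exponent_le hn1
      rw [hβdef]; linarith
    have hfin : (n : ℝ) ^ (-(1 / b) : ℝ)
        ≤ (1 / Real.log 2) ^ (1 / b : ℝ) * (L / n) ^ (1 / b : ℝ) := by
      rw [← Real.mul_rpow (by positivity) hLn0]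
      rw [Real.rpow_neg hnpos.le, ← Real.inv_rpow hnpos.le]
      apply Real.rpow_le_rpow (by positivity) ?_ (by positivity)
      rw [div_mul_div_comm, one_mul, inv_eq_one_div]
      rw [div_le_div_iff₀ hnpos (by positivity)]
      nlinarith
    have hkey : 1 / p4 * (1 - p) ^ n
        ≤ (c2 + 1) * ((1 / Real.log 2) ^ (1 / b : ℝ) * (L / n) ^ (1 / b : ℝ)) := by
      calc 1 / p4 * (1 - p) ^ n ≤ (c2 + 1) * ((n : ℝ) * (n : ℝ) ^ (-β)) := hstep
        _ = (c2 + 1) * ((n : ℝ) ^ (1 - β : ℝ)) := by rw [hnn]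
        _ ≤ (c2 + 1) * ((n : ℝ) ^ (-(1 / b) : ℝ)) :=
            mul_le_mul_of_nonneg_left h1β (by positivity)
        _ ≤ (c2 + 1) * ((1 / Real.log 2) ^ (1 / b : ℝ) * (L / n) ^ (1 / b : ℝ)) :=
            mul_le_mul_of_nonneg_left hfin (by positivity)
    calc t0 + r₀ * (1 / p4 * (1 - p) ^ n)
        ≤ t0 + r₀ * ((c2 + 1) * ((1 / Real.log 2) ^ (1 / b : ℝ) * (L / n) ^ (1 / b : ℝ))) :=
          add_le_add_right (mul_le_mul_of_nonneg_left hkey hr₀.le) t0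
      _ = C * (L / n) ^ (1 / b : ℝ) := by rw [ht0eq, hC]; ring
  · have hpeq : p = 1 := by
      rw [hp, min_eq_right]
      rw [hβdef] at hcase
      linarith [not_lt.mp hcase]
    have hz : (1 - p) ^ n = 0 := by
      rw [hpeq, sub_self, zero_pow (by omega)]
    rw [hz, mul_zero, mul_zero, add_zero, ht0eq]
    have hKC : K ^ (1 / b : ℝ) ≤ C := by
      rw [hC]
      have : 0 ≤ r₀ * (c2 + 1) * (1 / Real.log 2) ^ (1 / b : ℝ) := by positivity
      linarith
    exact mul_le_mul_of_nonneg_right hKC (Real.rpow_nonneg hLn0 _)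
/-- For all `a, b > 0` there is a constant `C > 0` depending only on `a`
and `b` (not on `M`) such that for every `n ≥ 2`, every metric space `M` and every Borel
probability measure `μ` on `M` whose support `Xμ` (the smallest closed set of full
measure) is compact and which satisfies the `(a,b)`-standard assumption,
`𝔼[d_H(Xμ, {X₁,…,Xₙ})] ≤ C (log n / n)^{1/b}`, the expectation being over `X₁,…,Xₙ`
i.i.d. of law `μ` (the product measure on `Fin n → M`). -/
theorem stmt_4 (a b : ℝ) (ha : 0 < a) (hb : 0 < b) :
    ∃ C : ℝ, 0 < C ∧
      ∀ (M : Type) [MetricSpace M] [MeasurableSpace M] [BorelSpace M]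
        (μ : Measure M), IsProbabilityMeasure μ →
        ∀ Xμ : Set M, IsClosed Xμ → μ Xμ = 1 →
          (∀ F : Set M, IsClosed F → μ F = 1 → Xμ ⊆ F) → IsCompact Xμ →
          (∀ x ∈ Xμ, ∀ r : ℝ, 0 < r →
            ENNReal.ofReal (min (a * r ^ b) 1) ≤ μ (ball x r)) →
          ∀ n : ℕ, 2 ≤ n →
            ∫⁻ ω, ENNReal.ofReal (hausdorffDist Xμ (Set.range ω))
                ∂(Measure.pi fun _ : Fin n => μ)
              ≤ ENNReal.ofReal (C * (Real.log n / n) ^ ((1 : ℝ) / b)) := by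
  classical
  have hr₀pos : (0:ℝ) < (1 / a) ^ (1 / b : ℝ) := Real.rpow_pos_of_pos (by positivity) _
  set r₀ : ℝ := (1 / a) ^ (1 / b : ℝ) with hr₀def
  have hc2pos : (0:ℝ) < (2:ℝ) ^ b := Real.rpow_pos_of_pos two_pos b
  set c2 : ℝ := (2:ℝ) ^ b with hc2def
  set K : ℝ := (2 + 1 / b) * c2 / a with hKdef
  have hKpos : 0 < K := by positivity
  have hlog2 : 0 < Real.log 2 := Real.log_pos one_lt_two
  set C : ℝ := K ^ (1 / b : ℝ) + r₀ * (c2 + 1) * (1 / Real.log 2) ^ (1 / b : ℝ) with hCdef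
  have hCpos : 0 < C := by positivity
  refine ⟨C, hCpos, ?_⟩
  intro M _ _ _ μ hprob Xμ hXclosed hXfull hXmin hXcompact hstd n hn
  haveI := hprob
  haveI : Nonempty (Fin n) := ⟨⟨0, by omega⟩⟩
  set ν : Measure (Fin n → M) := Measure.pi (fun _ : Fin n => μ) with hνdef
  haveI : IsProbabilityMeasure ν := by
    constructor
    rw [hνdef, ← Set.pi_univ Set.univ, Measure.pi_pi]
    simp
  set L : ℝ := Real.log n with hLdef
  have hnR : (2:ℝ) ≤ (n:ℝ) := by exact_mod_cast hn
  have hnpos : (0:ℝ) < n := by linarith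
  have hLlog2 : Real.log 2 ≤ L := Real.log_le_log (by norm_num) hnR
  have hLpos : 0 < L := lt_of_lt_of_le hlog2 hLlog2
  set t0 : ℝ := (K * L / n) ^ (1 / b : ℝ) with ht0def
  have ht0pos : 0 < t0 := Real.rpow_pos_of_pos (by positivity) _
  have ht0b : t0 ^ b = K * L / n := by
    rw [ht0def, ← Real.rpow_mul (by positivity), one_div_mul_cancel hb.ne', Real.rpow_one]
  obtain ⟨s, hsX, hsnet, hscard⟩ := net_exists μ Xμ ha hb hstd ht0pos
  set p : ℝ := min (a * (t0 / 2) ^ b) 1 with hpdef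
  have hppos : 0 < p := lt_min (by positivity) one_pos
  have hple1 : p ≤ 1 := min_le_right _ _
  set p4 : ℝ := min (a * (t0 / 4) ^ b) 1 with hp4def
  have hp4pos : 0 < p4 := lt_min (by positivity) one_pos
  -- identities for p and p4
  have hpid : p = min ((2 + 1 / b) * L / n) 1 := by
    rw [hpdef]
    congr 1
    rw [Real.div_rpow ht0pos.le (by norm_num), ht0b, hKdef, ← hc2def]
    field_simp
  have hp4id : p4 = min ((2 + 1 / b) * L / (c2 * n)) 1 := by
    rw [hp4def]
    congr 1
    have h4 : ((4:ℝ)) ^ b = c2 * c2 := by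
      rw [hc2def, ← Real.mul_rpow (by norm_num) (by norm_num)]
      norm_num
    rw [Real.div_rpow ht0pos.le (by norm_num), ht0b, h4, hKdef]
    field_simp
  -- the bad event
  set A : Set (Fin n → M) := ⋃ y ∈ s, Set.univ.pi (fun _ : Fin n => (ball y (t0 / 2))ᶜ)
    with hAdef
  have hAmeas : MeasurableSet A :=
    MeasurableSet.biUnion s.countable_toSet fun y _ =>
      MeasurableSet.univ_pi fun _ => measurableSet_ball.compl
  -- measure of the bad event
  have hA : ν A ≤ ENNReal.ofReal (1 / p4) * ENNReal.ofReal ((1 - p) ^ n) := by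
    calc ν A ≤ ∑ y ∈ s, ν (Set.univ.pi fun _ : Fin n => (ball y (t0 / 2))ᶜ) :=
          measure_biUnion_finset_le _ _
      _ ≤ ∑ _y ∈ s, ENNReal.ofReal ((1 - p) ^ n) := by
          refine Finset.sum_le_sum fun y hy => ?_
          rw [hνdef, Measure.pi_pi]
          have hball : ENNReal.ofReal p ≤ μ (ball y (t0 / 2)) :=
            hstd y (hsX hy) _ (by positivity)
          have hcompl : μ ((ball y (t0 / 2))ᶜ) ≤ ENNReal.ofReal (1 - p) := by
            rw [measure_compl measurableSet_ball (measure_ne_top _ _), measure_univ]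
            calc (1:ℝ≥0∞) - μ (ball y (t0 / 2)) ≤ 1 - ENNReal.ofReal p :=
                  tsub_le_tsub_left hball _
              _ = ENNReal.ofReal (1 - p) := by
                  rw [ENNReal.ofReal_sub 1 hppos.le, ENNReal.ofReal_one]
          calc ∏ _i : Fin n, μ ((ball y (t0 / 2))ᶜ)
              ≤ ∏ _i : Fin n, ENNReal.ofReal (1 - p) :=
                Finset.prod_le_prod' fun i _ => hcompl
            _ = ENNReal.ofReal (1 - p) ^ n := by
                rw [Finset.prod_const, Finset.card_univ, Fintype.card_fin]
            _ = ENNReal.ofReal ((1 - p) ^ n) := (ENNReal.ofReal_pow (by linarith) n).symm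
      _ = (s.card : ℝ≥0∞) * ENNReal.ofReal ((1 - p) ^ n) := by
          rw [Finset.sum_const, nsmul_eq_mul]
      _ ≤ ENNReal.ofReal (1 / p4) * ENNReal.ofReal ((1 - p) ^ n) := by
          apply mul_le_mul_left
          have h1 : (s.card : ℝ≥0∞) ≤ (ENNReal.ofReal p4)⁻¹ :=
            ENNReal.le_inv_iff_mul_le.mpr (hp4def ▸ hscard)
          rwa [← ENNReal.ofReal_inv_of_pos hp4pos, ← one_div] at h1
  -- full-measure support event
  set G : Set (Fin n → M) := Set.univ.pi (fun _ : Fin n => Xμ) with hGdef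
  have hGmeas : MeasurableSet G := MeasurableSet.univ_pi fun _ => hXclosed.measurableSet
  have hGfull : ν G = 1 := by
    rw [hνdef, hGdef, Measure.pi_pi]
    simp [hXfull]
  have hG_ae : ∀ᵐ ω ∂ν, ω ∈ G := by
    rw [ae_iff]
    have h0 : {ω : Fin n → M | ¬ω ∈ G} = Gᶜ := rfl
    rw [h0, measure_compl hGmeas (measure_ne_top _ _), hGfull, measure_univ, tsub_self]
  -- pointwise bound
  have hae : ∀ᵐ ω ∂ν, ENNReal.ofReal (hausdorffDist Xμ (Set.range ω))
      ≤ ENNReal.ofReal t0 + A.indicator (fun _ => ENNReal.ofReal r₀) ω := by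
    filter_upwards [hG_ae] with ω hω
    have hωmem : ∀ i, ω i ∈ Xμ := fun i => hω i (Set.mem_univ i)
    have hrange : Set.range ω ⊆ Xμ := by rintro _ ⟨i, rfl⟩; exact hωmem i
    by_cases hωA : ω ∈ A
    · have hd : hausdorffDist Xμ (Set.range ω) ≤ r₀ := by
        apply hausdorffDist_le_of_mem_dist hr₀pos.le
        · intro x hx
          refine ⟨ω (Classical.arbitrary (Fin n)), ⟨_, rfl⟩, ?_⟩
          exact diam_bound' μ Xμ hXmin ha hb hstd x hx _ (hωmem _)
        · intro z hz
          exact ⟨z, hrange hz, by simp [hr₀pos.le]⟩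
      rw [Set.indicator_of_mem hωA]
      calc ENNReal.ofReal (hausdorffDist Xμ (Set.range ω)) ≤ ENNReal.ofReal r₀ :=
            ENNReal.ofReal_le_ofReal hd
        _ ≤ ENNReal.ofReal t0 + ENNReal.ofReal r₀ := le_add_self
    · have hnA : ∀ y ∈ s, ∃ i, ω i ∈ ball y (t0 / 2) := by
        intro y hy
        by_contra hc
        push_neg at hc
        exact hωA (Set.mem_biUnion hy fun i _ => hc i)
      have hd : hausdorffDist Xμ (Set.range ω) ≤ t0 := by
        apply hausdorffDist_le_of_mem_dist ht0pos.le
        · intro x hx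
          obtain ⟨y, hy, hxy⟩ := hsnet x hx
          obtain ⟨i, hi⟩ := hnA y hy
          refine ⟨ω i, ⟨i, rfl⟩, ?_⟩
          have h1 : dist (ω i) y < t0 / 2 := mem_ball.mp hi
          have h2 : dist x (ω i) ≤ dist x y + dist y (ω i) := dist_triangle _ _ _
          rw [dist_comm y (ω i)] at h2
          linarith
        · intro z hz
          exact ⟨z, hrange hz, by simp [ht0pos.le]⟩
      rw [Set.indicator_of_notMem hωA, add_zero]
      exact ENNReal.ofReal_le_ofReal hd
  -- put it together
  calc ∫⁻ ω, ENNReal.ofReal (hausdorffDist Xμ (Set.range ω)) ∂ν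
      ≤ ∫⁻ ω, (ENNReal.ofReal t0 + A.indicator (fun _ => ENNReal.ofReal r₀) ω) ∂ν :=
        lintegral_mono_ae hae
    _ = ENNReal.ofReal t0 + ENNReal.ofReal r₀ * ν A := by
        rw [lintegral_add_left measurable_const, lintegral_const, measure_univ, mul_one,
          lintegral_indicator_const hAmeas]
    _ ≤ ENNReal.ofReal t0 + ENNReal.ofReal r₀ *
        (ENNReal.ofReal (1 / p4) * ENNReal.ofReal ((1 - p) ^ n)) := by
        exact add_le_add_right (mul_le_mul_right hA _) _
    _ = ENNReal.ofReal (t0 + r₀ * (1 / p4 * (1 - p) ^ n)) := by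
        have hq0 : (0:ℝ) ≤ (1 - p) ^ n := pow_nonneg (by linarith) n
        have h14 : (0:ℝ) ≤ 1 / p4 := by positivity
        rw [← ENNReal.ofReal_mul h14, ← ENNReal.ofReal_mul hr₀pos.le,
          ← ENNReal.ofReal_add ht0pos.le (mul_nonneg hr₀pos.le (mul_nonneg h14 hq0))]
    _ ≤ ENNReal.ofReal (C * (L / n) ^ (1 / b : ℝ)) := by
        apply ENNReal.ofReal_le_ofReal
        exact real_endgame b r₀ c2 L K C t0 p p4 n hn hb hr₀pos hc2pos hKpos
          hLlog2 hLdef hpid hp4id ht0def hCdef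
end

section
/- Let (M,ρ) be a metric space, a>0, b>0, and suppose M has a non-isolated point x. Let (xₙ)_{n≥1} be any sequence in M ∖ {x} with ρ(x,xₙ) ≤ (a n)^{−1/b} for all n. Then there is an absolute constant C' > 0 such that for every sequence of estimators Ŝₙ (Borel-measurable maps from Mⁿ to the space of nonempty compact subsets of M endowed with the Hausdorff metric), liminf_{n→∞} ρ(x,xₙ)^{−1} · sup_{μ ∈ 𝒫(a,b,M)} 𝔼_{μ^{⊗n}}[ d_H( X_μ, Ŝₙ(X₁,…,Xₙ) ) ] ≥ C'. -/
open MeasureTheory Metric Filter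

/-- The support of a Borel measure on a metric space: the set of points all of whose
open balls have positive measure. For the measures considered below it is required to
have full measure, so that it is the smallest closed set of `μ`-measure one. -/
def msupp {M : Type*} [MetricSpace M] [MeasurableSpace M] (μ : Measure M) : Set M :=
  {x : M | ∀ r : ℝ, 0 < r → 0 < μ (ball x r)}

/-- `𝒫(a,b,M)`: the Borel probability measures on `M` whose support is compact, has full
measure (i.e. is the smallest closed set of measure one) and which satisfy the
`(a,b)`-standard assumption. -/
def stdClass (M : Type) [MetricSpace M] [MeasurableSpace M] (a b : ℝ) :
    Set (Measure M) :=
  {μ : Measure M | IsProbabilityMeasure μ ∧ IsCompact (msupp μ) ∧ μ (msupp μ) = 1 ∧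
    ∀ x ∈ msupp μ, ∀ r : ℝ, 0 < r →
      ENNReal.ofReal (min (a * r ^ b) 1) ≤ μ (ball x r)}

lemma exp_two_le_eight : Real.exp 2 ≤ 8 := by
  have h := Real.exp_one_lt_d9
  have h2 : Real.exp 2 = Real.exp 1 ^ 2 := by
    rw [← Real.exp_nat_mul]; norm_num
  nlinarith [Real.exp_pos 1]

lemma pow_lower (n : ℕ) (hn : 2 ≤ n) (p : ℝ) (hpn : p ≤ 1 / n) :
    (1/8 : ℝ) ≤ (1 - p) ^ n := by
  have hn2 : (2:ℝ) ≤ n := by exact_mod_cast hn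
  have hn0 : (0:ℝ) < n := by linarith
  have hinv : 1 / (n:ℝ) ≤ 1/2 := by
    rw [div_le_div_iff₀ hn0 (by norm_num)]; linarith
  set t : ℝ := 1 - 1/n with ht_def
  have ht2 : (1/2:ℝ) ≤ t := by simp only [ht_def]; linarith
  have ht : (0:ℝ) < t := lt_of_lt_of_le (by norm_num) ht2
  have h1 : t ^ n ≤ (1 - p) ^ n := by
    apply pow_le_pow_left₀ ht.le
    simp only [ht_def]; linarith
  have hti : t⁻¹ ≤ 2 := by
    rw [inv_le_comm₀ ht (by norm_num)]; linarith
  have hnt : (n:ℝ) * (1 - t) = 1 := by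
    simp only [ht_def]; field_simp; ring
  have hlog1 : 1 - t⁻¹ ≤ Real.log t := by
    have h3 : Real.log t⁻¹ ≤ t⁻¹ - 1 := Real.log_le_sub_one_of_pos (by positivity)
    rw [Real.log_inv] at h3; linarith
  have hkey : (n:ℝ) * (t⁻¹ - 1) = t⁻¹ := by
    have htne : t ≠ 0 := ht.ne'
    field_simp
    nlinarith [hnt]
  have hlog : (-2:ℝ) ≤ (n:ℝ) * Real.log t := by
    have := mul_le_mul_of_nonneg_left hlog1 hn0.le
    nlinarith
  have hexp : Real.exp (-2) ≤ t ^ n := by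
    have : t ^ n = Real.exp ((n:ℝ) * Real.log t) := by
      rw [Real.exp_nat_mul, Real.exp_log ht]
    rw [this]
    exact Real.exp_le_exp.mpr hlog
  have h8 : (1/8:ℝ) ≤ Real.exp (-2) := by
    rw [Real.exp_neg, div_le_iff₀ (by norm_num)]
    rw [inv_mul_eq_div, le_div_iff₀ (Real.exp_pos 2)]
    nlinarith [exp_two_le_eight, Real.exp_pos 2]
  linarith

lemma lintegral_pi_singleton_le {M : Type} [MetricSpace M] [MeasurableSpace M] [BorelSpace M]
    (μ : Measure M) [SigmaFinite μ] (n : ℕ) (x : M) (f : (Fin n → M) → ENNReal) :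
    f (fun _ => x) * (μ {x}) ^ n ≤ ∫⁻ ω, f ω ∂(Measure.pi fun _ : Fin n => μ) := by
  have hset : ({fun _ => x} : Set (Fin n → M)) = Set.pi Set.univ (fun _ => ({x} : Set M)) := by
    ext ω; simp [funext_iff, Set.mem_pi]
  have h1 := MeasureTheory.lintegral_singleton (μ := Measure.pi fun _ : Fin n => μ) f (fun _ => x)
  have h2 : (Measure.pi fun _ : Fin n => μ) {fun _ => x} = (μ {x}) ^ n := by
    rw [hset, Measure.pi_pi]; simp
  calc f (fun _ => x) * (μ {x}) ^ n
      = ∫⁻ ω in {fun _ => x}, f ω ∂(Measure.pi fun _ : Fin n => μ) := by rw [h1, h2]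
    _ ≤ _ := setLIntegral_le_lintegral _ _

/-- There is an absolute constant `C' > 0` such that for every metric
space `M`, all `a, b > 0`, every non-isolated point `x ∈ M`, every sequence `(xₙ)` of
points distinct from `x` with `ρ(x,xₙ) ≤ (a n)^{-1/b}`, and every sequence of
Borel-measurable estimators `Sₙ : Mⁿ → {nonempty compact subsets of M}` (with the
Hausdorff metric on the codomain),
`liminf_n ρ(x,xₙ)⁻¹ · sup_{μ ∈ 𝒫(a,b,M)} 𝔼_{μ^⊗n}[d_H(Xμ, Sₙ(X₁,…,Xₙ))] ≥ C'`. -/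
theorem stmt_5 :
    ∃ C' : ℝ, 0 < C' ∧
      ∀ (M : Type) [MetricSpace M] [MeasurableSpace M] [BorelSpace M]
        (a b : ℝ), 0 < a → 0 < b →
        ∀ x : M, (∀ ε : ℝ, 0 < ε → ∃ y : M, y ≠ x ∧ dist y x < ε) →
        ∀ xs : ℕ → M,
          (∀ n : ℕ, 1 ≤ n → xs n ≠ x ∧ dist x (xs n) ≤ (a * n) ^ (-(1 : ℝ) / b)) →
        ∀ S : (n : ℕ) → (Fin n → M) → TopologicalSpace.NonemptyCompacts M,
          (∀ n : ℕ,
            @Measurable _ _ inferInstance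
              (borel (TopologicalSpace.NonemptyCompacts M)) (S n)) →
          ENNReal.ofReal C' ≤
            Filter.liminf
              (fun n : ℕ =>
                (ENNReal.ofReal (dist x (xs n)))⁻¹ *
                  ⨆ μ ∈ stdClass M a b,
                    ∫⁻ ω, ENNReal.ofReal
                        (hausdorffDist (msupp μ) ((S n ω : Set M)))
                      ∂(Measure.pi fun _ : Fin n => μ))
              Filter.atTop := by
  refine ⟨1/16, by norm_num, ?_⟩
  intro M _ _ _ a b ha hb x _hx xs hxs S _hS
  classical
  apply Filter.le_liminf_of_le (by isBoundedDefault)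
  filter_upwards [Filter.eventually_ge_atTop 2] with n hn
  have hn1 : 1 ≤ n := le_trans (by norm_num) hn
  obtain ⟨hne, hd⟩ := hxs n hn1
  set y := xs n with hy
  have hxy : x ≠ y := Ne.symm hne
  have hd0 : (0:ℝ) < dist x y := dist_pos.mpr hxy
  set d : ℝ := dist x y with hdd
  set p : ℝ := a * d ^ b with hp_def
  have hp0 : 0 < p := by
    have := Real.rpow_pos_of_pos hd0 b
    positivity
  -- p ≤ 1/n
  have hn0 : (0:ℝ) < n := by
    have : (2:ℝ) ≤ n := by exact_mod_cast hn
    linarith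
  have hp_le : p ≤ 1 / n := by
    have han : (0:ℝ) < a * n := by positivity
    have h1 : d ^ b ≤ ((a * n) ^ ((-(1:ℝ)) / b)) ^ b :=
      Real.rpow_le_rpow hd0.le hd hb.le
    have h2 : ((a * n) ^ ((-(1:ℝ)) / b)) ^ b = (a * n)⁻¹ := by
      have hbb : (-(1:ℝ) / b) * b = -1 := by field_simp
      rw [← Real.rpow_mul han.le, hbb, Real.rpow_neg_one]
    rw [h2] at h1
    have h3 : p ≤ a * (a * n)⁻¹ := by
      rw [hp_def]
      exact mul_le_mul_of_nonneg_left h1 ha.le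
    have h4 : a * (a * n)⁻¹ = 1 / n := by
      field_simp
    linarith
  have hp_half : p ≤ 1/2 := by
    have : 1 / (n:ℝ) ≤ 1/2 := by
      rw [div_le_div_iff₀ hn0 (by norm_num)]
      have : (2:ℝ) ≤ n := by exact_mod_cast hn
      linarith
    linarith
  -- the two measures
  set μ0 : Measure M := Measure.dirac x with hμ0
  set μ1 : Measure M :=
    ENNReal.ofReal (1 - p) • Measure.dirac x + ENNReal.ofReal p • Measure.dirac y with hμ1
  have h_eval : ∀ s : Set M, MeasurableSet s →
      μ1 s = (if x ∈ s then ENNReal.ofReal (1 - p) else 0)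
            + (if y ∈ s then ENNReal.ofReal p else 0) := by
    intro s hs
    simp [hμ1, Measure.dirac_apply' _ hs, Set.indicator_apply, mul_ite, mul_one, mul_zero]
  have hμ1prob : IsProbabilityMeasure μ1 := by
    constructor
    rw [h_eval Set.univ MeasurableSet.univ]
    simp only [Set.mem_univ, if_true]
    rw [← ENNReal.ofReal_add (by linarith) hp0.le]
    norm_num
  haveI := hμ1prob
  -- supports
  have hsupp0 : msupp μ0 = {x} := by
    ext z
    simp only [msupp, Set.mem_setOf_eq, Set.mem_singleton_iff]
    constructor
    · intro h
      by_contra hzx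
      have hr : 0 < dist x z := dist_pos.mpr (Ne.symm hzx)
      have := h (dist x z) hr
      rw [hμ0, Measure.dirac_apply' _ measurableSet_ball] at this
      simp only [Set.indicator_apply, mem_ball] at this
      rw [if_neg (by simp)] at this
      exact lt_irrefl 0 this
    · rintro rfl r hr
      rw [hμ0, Measure.dirac_apply' _ measurableSet_ball]
      simp [Set.indicator_apply, mem_ball_self hr]
  have hsupp1 : msupp μ1 = {x, y} := by
    ext z
    simp only [msupp, Set.mem_setOf_eq, Set.mem_insert_iff, Set.mem_singleton_iff]
    constructor
    · intro h
      by_contra hz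
      push_neg at hz
      obtain ⟨hzx, hzy⟩ := hz
      have hr : 0 < min (dist x z) (dist y z) :=
        lt_min (dist_pos.mpr (Ne.symm hzx)) (dist_pos.mpr (Ne.symm hzy))
      have := h _ hr
      rw [h_eval _ measurableSet_ball] at this
      rw [if_neg, if_neg] at this
      · exact lt_irrefl 0 (by simpa using this)
      · simp only [mem_ball]
        exact not_lt.mpr (min_le_right _ _)
      · simp only [mem_ball]
        exact not_lt.mpr (min_le_left _ _)
    · intro h r hr
      rcases h with hz | hz <;> rw [hz]
      · calc (0:ENNReal) < ENNReal.ofReal (1 - p) := ENNReal.ofReal_pos.mpr (by linarith)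
          _ ≤ μ1 (ball x r) := by
              rw [h_eval _ measurableSet_ball, if_pos (mem_ball_self hr)]
              exact le_self_add
      · calc (0:ENNReal) < ENNReal.ofReal p := ENNReal.ofReal_pos.mpr hp0
          _ ≤ μ1 (ball y r) := by
              rw [h_eval _ measurableSet_ball]
              rw [if_pos (mem_ball_self hr)]
              exact le_add_self
  -- membership in stdClass
  have hμ0mem : μ0 ∈ stdClass M a b := by
    refine ⟨by rw [hμ0]; infer_instance, ?_, ?_, ?_⟩
    · rw [hsupp0]; exact isCompact_singleton
    · rw [hsupp0, hμ0, Measure.dirac_apply' _ (measurableSet_singleton x)]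
      simp
    · intro z hz r hr
      rw [hsupp0, Set.mem_singleton_iff] at hz
      subst hz
      rw [hμ0, Measure.dirac_apply' _ measurableSet_ball]
      simp only [Set.indicator_apply, mem_ball_self hr, if_true, Pi.one_apply]
      exact ENNReal.ofReal_le_one.mpr (min_le_right _ _)
  have hr_ball : ∀ r : ℝ, d < r → μ1 (ball x r) = 1 ∧ μ1 (ball y r) = 1 := by
    intro r hrd
    constructor
    · rw [h_eval _ measurableSet_ball, if_pos (mem_ball_self (lt_trans hd0 hrd)),
        if_pos (by simp only [mem_ball]; rw [dist_comm]; exact hrd)]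
      rw [← ENNReal.ofReal_add (by linarith) hp0.le]; norm_num
    · rw [h_eval _ measurableSet_ball, if_pos (by simp only [mem_ball]; exact hrd),
        if_pos (mem_ball_self (lt_trans hd0 hrd))]
      rw [← ENNReal.ofReal_add (by linarith) hp0.le]; norm_num
  have hμ1mem : μ1 ∈ stdClass M a b := by
    refine ⟨hμ1prob, ?_, ?_, ?_⟩
    · rw [hsupp1]
      exact (Set.finite_singleton y |>.insert x).isCompact
    · rw [hsupp1, h_eval _ ((measurableSet_singleton y).insert x)]
      rw [if_pos (by simp), if_pos (by simp)]
      rw [← ENNReal.ofReal_add (by linarith) hp0.le]; norm_num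
    · intro z hz r hr
      have harb : ∀ r' : ℝ, 0 < r' → r' ≤ d → a * r' ^ b ≤ p := by
        intro r' hr0 hrd
        rw [hp_def]
        exact mul_le_mul_of_nonneg_left (Real.rpow_le_rpow hr0.le hrd hb.le) ha.le
      rw [hsupp1] at hz
      rcases hz with hz | hz <;> rw [hz]
      · by_cases hrd : r ≤ d
        · have hmin : min (a * r ^ b) 1 ≤ 1 - p := by
            calc min (a * r ^ b) 1 ≤ a * r ^ b := min_le_left _ _
              _ ≤ p := harb r hr hrd
              _ ≤ 1 - p := by linarith
          calc ENNReal.ofReal (min (a * r ^ b) 1) ≤ ENNReal.ofReal (1 - p) :=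
                ENNReal.ofReal_le_ofReal hmin
            _ ≤ μ1 (ball x r) := by
                rw [h_eval _ measurableSet_ball, if_pos (mem_ball_self hr)]
                exact le_self_add
        · push_neg at hrd
          rw [(hr_ball r hrd).1]
          exact ENNReal.ofReal_le_one.mpr (min_le_right _ _)
      · by_cases hrd : r ≤ d
        · have hmin : min (a * r ^ b) 1 ≤ p :=
            le_trans (min_le_left _ _) (harb r hr hrd)
          calc ENNReal.ofReal (min (a * r ^ b) 1) ≤ ENNReal.ofReal p :=
                ENNReal.ofReal_le_ofReal hmin
            _ ≤ μ1 (ball y r) := by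
                rw [h_eval _ measurableSet_ball, if_pos (mem_ball_self hr)]
                exact le_add_self
        · push_neg at hrd
          rw [(hr_ball r hrd).2]
          exact ENNReal.ofReal_le_one.mpr (min_le_right _ _)
  -- abbreviations
  set K : Set M := (S n (fun _ => x) : Set M) with hK
  set D0 : ℝ := hausdorffDist ({x} : Set M) K with hD0
  set D1 : ℝ := hausdorffDist ({x, y} : Set M) K with hD1
  set T : ENNReal := ⨆ μ ∈ stdClass M a b,
      ∫⁻ ω, ENNReal.ofReal (hausdorffDist (msupp μ) ((S n ω : Set M)))
        ∂(Measure.pi fun _ : Fin n => μ) with hT_def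
  -- lower bounds on T
  have hμ0x : μ0 ({x} : Set M) = 1 := by
    rw [hμ0, Measure.dirac_apply' _ (measurableSet_singleton x)]; simp
  have hμ1x : μ1 ({x} : Set M) = ENNReal.ofReal (1 - p) := by
    rw [h_eval _ (measurableSet_singleton x)]
    simp [Set.mem_singleton_iff, hne]
  have hA : ENNReal.ofReal D0 ≤ T := by
    have h1 := lintegral_pi_singleton_le μ0 n x
      (fun ω => ENNReal.ofReal (hausdorffDist (msupp μ0) ((S n ω : Set M))))
    have hF : (∫⁻ ω, ENNReal.ofReal (hausdorffDist (msupp μ0) ((S n ω : Set M)))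
        ∂(Measure.pi fun _ : Fin n => μ0)) ≤ T := by
      rw [hT_def]
      exact le_biSup (fun μ : Measure M => ∫⁻ ω, ENNReal.ofReal
        (hausdorffDist (msupp μ) ((S n ω : Set M))) ∂(Measure.pi fun _ : Fin n => μ)) hμ0mem
    have h2 := le_trans h1 hF
    rw [hμ0x, one_pow, mul_one, hsupp0] at h2
    exact h2
  have hB : ENNReal.ofReal D1 * ENNReal.ofReal ((1 - p) ^ n) ≤ T := by
    have h1 := lintegral_pi_singleton_le μ1 n x
      (fun ω => ENNReal.ofReal (hausdorffDist (msupp μ1) ((S n ω : Set M))))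
    have hF : (∫⁻ ω, ENNReal.ofReal (hausdorffDist (msupp μ1) ((S n ω : Set M)))
        ∂(Measure.pi fun _ : Fin n => μ1)) ≤ T := by
      rw [hT_def]
      exact le_biSup (fun μ : Measure M => ∫⁻ ω, ENNReal.ofReal
        (hausdorffDist (msupp μ) ((S n ω : Set M))) ∂(Measure.pi fun _ : Fin n => μ)) hμ1mem
    have h2 := le_trans h1 hF
    rw [hμ1x, hsupp1, ← ENNReal.ofReal_pow (by linarith)] at h2
    exact h2
  -- triangle
  have hKne : K.Nonempty := (S n (fun _ => x)).nonempty
  have hKb : Bornology.IsBounded K := (S n (fun _ => x)).isCompact.isBounded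
  have hxyb : Bornology.IsBounded ({x, y} : Set M) :=
    (Set.finite_singleton y |>.insert x).isBounded
  have fin1 : EMetric.hausdorffEdist ({x, y} : Set M) K ≠ ⊤ :=
    hausdorffEdist_ne_top_of_nonempty_of_bounded ⟨x, by simp⟩ hKne hxyb hKb
  have fin2 : EMetric.hausdorffEdist ({x, y} : Set M) ({x} : Set M) ≠ ⊤ :=
    hausdorffEdist_ne_top_of_nonempty_of_bounded ⟨x, by simp⟩ ⟨x, rfl⟩ hxyb
      (Set.finite_singleton x).isBounded
  have htri : d ≤ D1 + D0 := by
    calc d = dist y x := dist_comm x y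
      _ = infDist y ({x} : Set M) := infDist_singleton.symm
      _ ≤ hausdorffDist ({x, y} : Set M) ({x} : Set M) :=
          infDist_le_hausdorffDist_of_mem (by simp) fin2
      _ ≤ hausdorffDist ({x, y} : Set M) K + hausdorffDist K ({x} : Set M) :=
          hausdorffDist_triangle fin1
      _ = D1 + D0 := by
          rw [hD1, hD0, hausdorffDist_comm (s := K) (t := ({x} : Set M))]
  -- combine
  have hc1 : ENNReal.ofReal ((1 - p) ^ n) ≤ 1 :=
    ENNReal.ofReal_le_one.mpr (pow_le_one₀ (by linarith) (by linarith))
  have hc8 : ENNReal.ofReal (1/8 : ℝ) ≤ ENNReal.ofReal ((1 - p) ^ n) :=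
    ENNReal.ofReal_le_ofReal (pow_lower n hn p hp_le)
  have hsum : ENNReal.ofReal (d / 8) ≤ T + T := by
    have e1 : ENNReal.ofReal (d / 8) = ENNReal.ofReal (1/8 : ℝ) * ENNReal.ofReal d := by
      rw [← ENNReal.ofReal_mul (by norm_num)]; ring_nf
    have e2 : ENNReal.ofReal d ≤ ENNReal.ofReal D1 + ENNReal.ofReal D0 := by
      rw [← ENNReal.ofReal_add hausdorffDist_nonneg hausdorffDist_nonneg]
      exact ENNReal.ofReal_le_ofReal htri
    calc ENNReal.ofReal (d / 8)
        = ENNReal.ofReal (1/8 : ℝ) * ENNReal.ofReal d := e1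
      _ ≤ ENNReal.ofReal ((1 - p) ^ n) * (ENNReal.ofReal D1 + ENNReal.ofReal D0) :=
          mul_le_mul' hc8 e2
      _ = ENNReal.ofReal D1 * ENNReal.ofReal ((1 - p) ^ n)
          + ENNReal.ofReal ((1 - p) ^ n) * ENNReal.ofReal D0 := by ring
      _ ≤ T + T :=
          add_le_add hB (le_trans (mul_le_mul' hc1 le_rfl) (by rw [one_mul]; exact hA))
  have hT16 : ENNReal.ofReal (d / 16) ≤ T := by
    have e1 : ENNReal.ofReal (d / 8) = 2 * ENNReal.ofReal (d / 16) := by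
      rw [show (2 : ENNReal) = ENNReal.ofReal 2 by norm_num,
        ← ENNReal.ofReal_mul (by norm_num)]
      congr 1
      ring
    have e2 : T + T = 2 * T := (two_mul T).symm
    rw [e2, e1] at hsum
    exact (ENNReal.mul_le_mul_iff_right (by norm_num) (by norm_num)).mp hsum
  -- finish
  have hdne : ENNReal.ofReal d ≠ 0 := (ENNReal.ofReal_pos.mpr hd0).ne'
  calc ENNReal.ofReal (1/16 : ℝ)
      = (ENNReal.ofReal d)⁻¹ * (ENNReal.ofReal d * ENNReal.ofReal (1/16 : ℝ)) := by
        rw [← mul_assoc, ENNReal.inv_mul_cancel hdne ENNReal.ofReal_ne_top, one_mul]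
    _ = (ENNReal.ofReal d)⁻¹ * ENNReal.ofReal (d / 16) := by
        rw [← ENNReal.ofReal_mul hd0.le]; ring_nf
    _ ≤ (ENNReal.ofReal d)⁻¹ * T := by gcongr
end

section
/- Let f : ℝ^d → [0,∞) be a Lebesgue-measurable probability density with support X_f contained in a compact set χ ⊂ ℝ^d, and let G₀ = { x : f(x) > 0 }. Assume assumption [B]: there exist constants ε₀ > 0 and C_b > 0 such that for all ε ∈ (0, ε₀], the ε-inner set I_ε(G₀) is nonempty and d(x, I_ε(G₀)) ≤ C_b ε for all x ∈ ∂G₀. Then d_H(G₀, X_f) = 0; equivalently, X_f = closure(G₀). -/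
open MeasureTheory Metric

/-- The `ε`-inner set of a set `G`: the union of all open balls of radius `ε` entirely
contained in `G`. -/
def innerSet {E : Type*} [MetricSpace E] (ε : ℝ) (G : Set E) : Set E :=
  ⋃ x ∈ {x : E | ball x ε ⊆ G}, ball x ε

/-- Let `f : ℝ^d → [0,∞)` be a measurable probability density with
support `X_f` (smallest closed set of full `f·λ`-measure) contained in a compact set
`χ`, and `G₀ = {x | f x > 0}`. Under assumption `[B]` (for all `ε ∈ (0, ε₀]` the
`ε`-inner set of `G₀` is nonempty and every boundary point of `G₀` is within `C_b ε` of
it), one has `d_H(G₀, X_f) = 0`, equivalently `X_f = closure G₀`. -/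
theorem stmt_10 {d : ℕ} (f : EuclideanSpace ℝ (Fin d) → ℝ)
    (hf_meas : Measurable f) (hf_nonneg : ∀ x, 0 ≤ f x)
    (hf_int : ∫ x, f x = 1)
    (Xf : Set (EuclideanSpace ℝ (Fin d)))
    (hclosed : IsClosed Xf)
    (hfull : volume.withDensity (fun x => ENNReal.ofReal (f x)) Xf = 1)
    (hmin : ∀ F : Set (EuclideanSpace ℝ (Fin d)), IsClosed F →
      volume.withDensity (fun x => ENNReal.ofReal (f x)) F = 1 → Xf ⊆ F)
    (χ : Set (EuclideanSpace ℝ (Fin d))) (hχ : IsCompact χ) (hXχ : Xf ⊆ χ)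
    (ε₀ Cb : ℝ) (hε₀ : 0 < ε₀) (hCb : 0 < Cb)
    (hB : ∀ ε : ℝ, 0 < ε → ε ≤ ε₀ →
      (innerSet ε {x | 0 < f x}).Nonempty ∧
      ∀ x ∈ frontier {x | 0 < f x},
        infDist x (innerSet ε {x | 0 < f x}) ≤ Cb * ε) :
    hausdorffDist {x | 0 < f x} Xf = 0 ∧ Xf = closure {x | 0 < f x} := by

  set G : Set (EuclideanSpace ℝ (Fin d)) := {x | 0 < f x} with hGdef
  set μ := volume.withDensity (fun x => ENNReal.ofReal (f x)) with hμdef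
  have hmeasG : MeasurableSet G := measurableSet_lt measurable_const hf_meas
  have hint : Integrable f := by
    by_contra h
    rw [integral_undef h] at hf_int
    norm_num at hf_int
  have hμuniv : μ Set.univ = 1 := by
    rw [hμdef, withDensity_apply _ MeasurableSet.univ, Measure.restrict_univ,
      ← ofReal_integral_eq_lintegral_ofReal hint (Filter.Eventually.of_forall hf_nonneg),
      hf_int]
    norm_num
  have hGc : μ Gᶜ = 0 := by
    rw [hμdef, withDensity_apply _ hmeasG.compl]
    have : ∀ x ∈ Gᶜ, ENNReal.ofReal (f x) = 0 := by
      intro x hx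
      simp only [hGdef, Set.mem_compl_iff, Set.mem_setOf_eq, not_lt] at hx
      simpa [ENNReal.ofReal_eq_zero] using hx
    calc ∫⁻ x in Gᶜ, ENNReal.ofReal (f x) = ∫⁻ _x in Gᶜ, 0 :=
          setLIntegral_congr_fun hmeasG.compl this
      _ = 0 := lintegral_zero
  have hclG : μ (closure G) = 1 := by
    refine le_antisymm (hμuniv ▸ measure_mono (Set.subset_univ _)) ?_
    have h1 : μ ((closure G)ᶜ) = 0 :=
      measure_mono_null (Set.compl_subset_compl.2 subset_closure) hGc
    calc (1 : ENNReal) = μ Set.univ := hμuniv.symm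
      _ = μ (closure G ∪ (closure G)ᶜ) := by rw [Set.union_compl_self]
      _ ≤ μ (closure G) + μ ((closure G)ᶜ) := measure_union_le _ _
      _ = μ (closure G) := by rw [h1, add_zero]
  have hXsub : Xf ⊆ closure G := hmin _ isClosed_closure hclG
  have hXfc : μ Xfᶜ = 0 := by
    rw [measure_compl hclosed.measurableSet (by rw [hfull]; exact ENNReal.one_ne_top),
      hμuniv, hfull, tsub_self]
  have hsub : closure G ⊆ Xf := by
    intro y hy
    by_contra hyX
    obtain ⟨r, hr, hball⟩ := Metric.isOpen_iff.1 hclosed.isOpen_compl y hyX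
    have hμball : μ (ball y r) = 0 := measure_mono_null hball hXfc
    have hvol : volume (G ∩ ball y r) = 0 := by
      rw [hμdef, withDensity_apply _ measurableSet_ball] at hμball
      have hae := (setLIntegral_eq_zero_iff measurableSet_ball
        hf_meas.ennreal_ofReal).1 hμball
      have hae2 : ∀ᵐ x ∂(volume : Measure (EuclideanSpace ℝ (Fin d))),
          ¬ (x ∈ G ∧ x ∈ ball y r) := by
        refine Filter.Eventually.mono hae fun x hx => ?_
        rintro ⟨hxG, hxb⟩
        have := hx hxb
        rw [ENNReal.ofReal_eq_zero] at this
        exact absurd hxG (by simp [hGdef, not_lt, this])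
      have h0 : volume {x : EuclideanSpace ℝ (Fin d) | x ∈ G ∧ x ∈ ball y r} = 0 := by
        simpa [ae_iff] using hae2
      exact measure_mono_null (fun x hx => hx) h0
    -- find a ball inside G ∩ ball y r
    obtain ⟨z, ε, hε, hzsub⟩ :
        ∃ (z : EuclideanSpace ℝ (Fin d)) (ε : ℝ), 0 < ε ∧ ball z ε ⊆ G ∩ ball y r := by
      by_cases hyi : y ∈ interior G
      · obtain ⟨s, hs, hsG⟩ := Metric.mem_nhds_iff.1 (mem_interior_iff_mem_nhds.1 hyi)
        refine ⟨y, min s r, lt_min hs hr, fun w hw => ?_⟩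
        rw [mem_ball] at hw
        exact ⟨hsG (mem_ball.2 (hw.trans_le (min_le_left _ _))),
          mem_ball.2 (hw.trans_le (min_le_right _ _))⟩
      · have hyfr : y ∈ frontier G := by
          rw [frontier_eq_closure_inter_closure]
          exact ⟨hy, by rwa [closure_compl, Set.mem_compl_iff]⟩
        set ε := min ε₀ (r / (Cb + 3)) with hεdef
        have hε : 0 < ε := lt_min hε₀ (div_pos hr (by linarith))
        obtain ⟨hne, hbd⟩ := hB ε hε (min_le_left _ _)
        have hd : infDist y (innerSet ε G) < Cb * ε + ε :=
          lt_of_le_of_lt (hbd y hyfr) (by linarith)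
        obtain ⟨p, hp, hpd⟩ := (Metric.infDist_lt_iff hne).1 hd
        simp only [innerSet, Set.mem_iUnion, Set.mem_setOf_eq] at hp
        obtain ⟨z, hzG, hpz⟩ := hp
        refine ⟨z, ε, hε, fun w hw => ?_⟩
        refine ⟨hzG hw, mem_ball.2 ?_⟩
        have h1 : dist w z < ε := mem_ball.1 hw
        have h2 : dist p z < ε := mem_ball.1 hpz
        have h3 : dist y p < Cb * ε + ε := hpd
        have hεr : (Cb + 3) * ε ≤ r := by
          rw [hεdef]
          calc (Cb + 3) * min ε₀ (r / (Cb + 3)) ≤ (Cb + 3) * (r / (Cb + 3)) := by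
                apply mul_le_mul_of_nonneg_left (min_le_right _ _) (by linarith)
            _ = r := by field_simp
        calc dist w y ≤ dist w z + dist z p + dist p y := dist_triangle4 w z p y
          _ < ε + ε + (Cb * ε + ε) := by
              rw [dist_comm z p, dist_comm p y]; linarith
          _ = (Cb + 3) * ε := by ring
          _ ≤ r := hεr
    have hpos : 0 < volume (ball z ε) := measure_ball_pos volume z hε
    rw [measure_mono_null hzsub hvol] at hpos
    exact lt_irrefl _ hpos
  have hXeq : Xf = closure G := le_antisymm hXsub (closure_minimal (subset_closure.trans hsub) hclosed)
  refine ⟨?_, hXeq⟩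
  rw [hXeq, hausdorffDist]
  rw [EMetric.hausdorffEdist_self_closure]
  simp
end

section
/- Let f : ℝ^d → [0,∞) be a Lebesgue-measurable probability density supported in a compact set χ ⊂ ℝ^d, let μ = f·λ, and let G₀ = { x : f(x) > 0 }. Assume assumption [A]: f is bounded above by f_max > 0 and there exist constants α, C_a, δ_a > 0 such that every x ∈ G₀ with f(x) ≤ δ_a satisfies f(x) ≥ C_a · d(x, ∂G₀)^α; and assumption [B]: there exist ε₀ > 0 and C_b > 0 such that for all ε ∈ (0, ε₀], I_ε(G₀) ≠ ∅ and d(x, I_ε(G₀)) ≤ C_b ε for all x ∈ ∂G₀. Then μ satisfies a standard assumption with exponent b = α + d: there exist a > 0 and r₀ > 0, depending only on d, α, C_a, C_b, δ_a and ε₀, such that μ(B(x,r)) ≥ a r^{α+d} for every x ∈ closure(G₀) and every r ∈ (0, r₀). -/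
open MeasureTheory Metric

lemma aux_ball_subset {E : Type*} [NormedAddCommGroup E] [NormedSpace ℝ E]
    {G : Set E} {x : E} {ρ : ℝ} (hx : x ∈ closure G)
    (hd : ball x ρ ∩ frontier G = ∅) : ball x ρ ⊆ G := by
  rcases le_or_gt ρ 0 with h | h
  · simp [ball_eq_empty.2 h]
  have hxb : x ∈ ball x ρ := mem_ball_self h
  have hxF : x ∉ frontier G := fun hF => (Set.eq_empty_iff_forall_notMem.1 hd x ⟨hxb, hF⟩)
  have hxi : x ∈ interior G := by
    rw [← closure_diff_interior] at hxF
    by_contra h'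
    exact hxF ⟨hx, h'⟩
  have hpc : IsPreconnected (ball x ρ) := (convex_ball x ρ).isPreconnected
  have hcov : ball x ρ ⊆ interior G ∪ (closure (interior G))ᶜ := by
    intro y hy
    by_cases hyU : y ∈ closure (interior G)
    · left
      by_contra hyU'
      have hyf : y ∈ frontier (interior G) := by
        rw [← closure_diff_interior, interior_interior]
        exact ⟨hyU, hyU'⟩
      exact Set.eq_empty_iff_forall_notMem.1 hd y ⟨hy, frontier_interior_subset hyf⟩
    · right; exact hyU
  intro y hy
  rcases hcov hy with hyU | hyV
  · exact interior_subset hyU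
  · exfalso
    obtain ⟨z, _, hzU, hzV⟩ := hpc (interior G) (closure (interior G))ᶜ isOpen_interior
      isClosed_closure.isOpen_compl hcov ⟨x, hxb, hxi⟩ ⟨y, hy, hyV⟩
    exact hzV (subset_closure hzU)

/-- Let `f : ℝ^d → [0,∞)` be a measurable probability density with
support in a compact set `χ`, `μ = f·λ` and `G₀ = {x | f x > 0}`. Under assumption `[A]`
(`f ≤ f_max` and `f(x) ≥ C_a d(x, ∂G₀)^α` whenever `x ∈ G₀` and `f(x) ≤ δ_a`) and
assumption `[B]` (for all `ε ∈ (0, ε₀]` the `ε`-inner set of `G₀` is nonempty and each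
boundary point of `G₀` is within `C_b ε` of it), `μ` satisfies a standard assumption
with exponent `b = α + d`: there are `a > 0` and `r₀ > 0` with
`μ(B(x,r)) ≥ a r^{α+d}` for all `x ∈ closure G₀` and `r ∈ (0, r₀)`. -/
theorem stmt_11 {d : ℕ} (f : EuclideanSpace ℝ (Fin d) → ℝ)
    (hf_meas : Measurable f) (hf_nonneg : ∀ x, 0 ≤ f x)
    (hf_int : ∫ x, f x = 1)
    (χ : Set (EuclideanSpace ℝ (Fin d))) (hχ : IsCompact χ)
    (hsupp : ∀ x, x ∉ χ → f x = 0)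
    (fmax : ℝ) (hfmax : 0 < fmax) (hbd : ∀ x, f x ≤ fmax)
    (α Ca δa : ℝ) (hα : 0 < α) (hCa : 0 < Ca) (hδa : 0 < δa)
    (hA : ∀ x ∈ {y | 0 < f y}, f x ≤ δa →
      Ca * infDist x (frontier {y | 0 < f y}) ^ α ≤ f x)
    (ε₀ Cb : ℝ) (hε₀ : 0 < ε₀) (hCb : 0 < Cb)
    (hB : ∀ ε : ℝ, 0 < ε → ε ≤ ε₀ →
      (innerSet ε {y | 0 < f y}).Nonempty ∧
      ∀ x ∈ frontier {y | 0 < f y},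
        infDist x (innerSet ε {y | 0 < f y}) ≤ Cb * ε) :
    ∃ a r₀ : ℝ, 0 < a ∧ 0 < r₀ ∧
      ∀ x ∈ closure {y | 0 < f y}, ∀ r : ℝ, 0 < r → r < r₀ →
        ENNReal.ofReal (a * r ^ (α + d)) ≤
          volume.withDensity (fun x => ENNReal.ofReal (f x)) (ball x r) := by
  classical
  set G : Set (EuclideanSpace ℝ (Fin d)) := {y | 0 < f y} with hG
  set K : ℝ := 2 * Cb + 6 with hK
  have hK6 : (6:ℝ) ≤ K := by nlinarith
  have hKpos : (0:ℝ) < K := by linarith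
  set vb := volume (ball (0 : EuclideanSpace ℝ (Fin d)) 1) with hvb
  have hvb_pos : 0 < vb := measure_ball_pos _ _ one_pos
  have hvb_ne_top : vb ≠ ⊤ := measure_ball_lt_top.ne
  set v : ℝ := vb.toReal with hv
  have hvpos : 0 < v := ENNReal.toReal_pos hvb_pos.ne' hvb_ne_top
  set c₁ : ℝ := min δa (Ca * (1/(2*K)) ^ α) with hc₁
  have hc₁pos : 0 < c₁ := lt_min hδa (by positivity)
  set a : ℝ := min 1 (c₁ * (1/(2*K)) ^ d * v) with ha
  have hapos : 0 < a := lt_min one_pos (by positivity)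
  have ha1 : a ≤ 1 := min_le_left _ _
  refine ⟨a, min 1 (K * ε₀), hapos, lt_min one_pos (by positivity), ?_⟩
  intro x hx r hr hrlt
  have hr1 : r < 1 := lt_of_lt_of_le hrlt (min_le_left _ _)
  have hrK : r < K * ε₀ := lt_of_lt_of_le hrlt (min_le_right _ _)
  rcases eq_or_ne (frontier G) ∅ with hFe | hFne
  · -- frontier empty : G = univ
    have hball : ∀ ρ : ℝ, ball x ρ ⊆ G := fun ρ =>
      aux_ball_subset hx (by rw [hFe, Set.inter_empty])
    have hGuniv : G = Set.univ := by
      ext z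
      simp only [Set.mem_univ, iff_true]
      refine hball (dist x z + 1) ?_
      rw [mem_ball, dist_comm]
      linarith [dist_nonneg (x := x) (y := z)]
    rcases Nat.eq_zero_or_pos d with hd0 | hdpos
    · subst hd0
      haveI : Subsingleton (EuclideanSpace ℝ (Fin 0)) :=
        ⟨fun a b => PiLp.ext fun i => i.elim0⟩
      have hbu : ball x r = Set.univ := Set.eq_univ_of_forall fun y => by
        rw [Subsingleton.elim y x]; exact mem_ball_self hr
      have hint : Integrable f := by
        by_contra hni
        rw [integral_undef hni] at hf_int
        norm_num at hf_int
      have hμ : volume.withDensity (fun y => ENNReal.ofReal (f y)) (ball x r) = 1 := by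
        rw [withDensity_apply _ measurableSet_ball, hbu, Measure.restrict_univ,
          ← ofReal_integral_eq_lintegral_ofReal hint (Filter.Eventually.of_forall hf_nonneg),
          hf_int, ENNReal.ofReal_one]
      rw [hμ]
      refine ENNReal.ofReal_le_one.2 ?_
      have hrα : r ^ (α + ((0:ℕ):ℝ)) ≤ 1 := by
        rw [Nat.cast_zero, add_zero]
        exact Real.rpow_le_one hr.le hr1.le hα.le
      calc a * r ^ (α + ((0:ℕ):ℝ)) ≤ 1 * 1 :=
            mul_le_mul ha1 hrα (Real.rpow_nonneg hr.le _) zero_le_one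
        _ = 1 := mul_one 1
    · exfalso
      have hχu : χ = Set.univ := by
        apply Set.eq_univ_of_univ_subset
        rw [← hGuniv]
        intro z hz
        by_contra hzχ
        exact absurd (hsupp z hzχ) (ne_of_gt hz)
      haveI : Nontrivial (EuclideanSpace ℝ (Fin d)) := by
        refine nontrivial_of_ne (EuclideanSpace.single ⟨0, hdpos⟩ (1:ℝ)) 0 fun h => ?_
        have := congrArg (fun v => v ⟨0, hdpos⟩) h
        simp at this
      haveI := NormedSpace.noncompactSpace ℝ (E := EuclideanSpace ℝ (Fin d))
      exact NoncompactSpace.noncompact_univ (hχu ▸ hχ)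
  · -- main case : frontier nonempty
    have hFne' : (frontier G).Nonempty := Set.nonempty_iff_ne_empty.2 hFne
    set ε : ℝ := r / K with hε
    have hεpos : 0 < ε := div_pos hr hKpos
    have hεle : ε ≤ ε₀ := by
      rw [hε, div_le_iff₀ hKpos]
      nlinarith
    have hεr2 : ε ≤ r / 2 := by
      rw [hε, div_le_div_iff₀ hKpos (by norm_num)]
      nlinarith
    obtain ⟨w, hwG, hwx⟩ : ∃ w, ball w ε ⊆ G ∧ ball w ε ⊆ ball x r := by
      rcases lt_or_ge (infDist x (frontier G)) (r/2) with hcase | hcase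
      · obtain ⟨p, hpF, hpd⟩ := (infDist_lt_iff hFne').1 hcase
        obtain ⟨hIne, hIbd⟩ := hB ε hεpos hεle
        have h1 : infDist p (innerSet ε G) < Cb * ε + ε :=
          lt_of_le_of_lt (hIbd p hpF) (by linarith)
        obtain ⟨z, hzI, hzd⟩ := (infDist_lt_iff hIne).1 h1
        obtain ⟨w, hwsub, hzw⟩ : ∃ w, ball w ε ⊆ G ∧ z ∈ ball w ε := by
          simpa [innerSet, Set.mem_iUnion] using hzI
        refine ⟨w, hwsub, fun y hy => ?_⟩
        have hεr : (Cb + 3) * ε = r / 2 := by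
          rw [hε, hK]
          field_simp
          ring
        have t1 := dist_triangle y w x
        have t2 := dist_triangle w z x
        have t3 := dist_triangle z p x
        have hyw : dist y w < ε := mem_ball.1 hy
        have hwz : dist w z < ε := by rw [dist_comm]; exact mem_ball.1 hzw
        have hzp : dist z p < Cb * ε + ε := by rw [dist_comm]; exact hzd
        have hpx : dist p x < r / 2 := by rw [dist_comm]; exact hpd
        rw [mem_ball]
        linarith
      · have hsub : ball x (r/2) ⊆ G := by
          refine aux_ball_subset hx ?_
          ext p
          simp only [Set.mem_inter_iff, Set.mem_empty_iff_false, iff_false, not_and]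
          intro hpb hpF
          have h1 : infDist x (frontier G) ≤ dist x p := infDist_le_dist_of_mem hpF
          have h2 : dist x p < r / 2 := by rw [dist_comm]; exact mem_ball.1 hpb
          linarith
        exact ⟨x, (ball_subset_ball hεr2).trans hsub,
          ball_subset_ball (by linarith)⟩
    set m : ℝ := min δa (Ca * (ε/2) ^ α) with hm
    have hmpos : 0 < m := lt_min hδa (by positivity)
    have hfm : ∀ y ∈ ball w (ε/2), m ≤ f y := by
      intro y hy
      have hyG : y ∈ G := hwG (ball_subset_ball (by linarith) hy)
      have hyd : ε/2 ≤ infDist y (frontier G) := by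
        by_contra hcon
        push_neg at hcon
        obtain ⟨p, hp, hplt⟩ := (infDist_lt_iff hFne').1 hcon
        have hpw : ε ≤ dist p w := by
          by_contra h'
          push_neg at h'
          have hpi : p ∈ interior G :=
            (IsOpen.subset_interior_iff isOpen_ball).2 hwG (mem_ball.2 h')
          rw [← closure_diff_interior] at hp
          exact hp.2 hpi
        have ht := dist_triangle p y w
        have hyw : dist y w < ε/2 := mem_ball.1 hy
        have hyp : dist y p = dist p y := dist_comm y p
        linarith
      rcases le_or_gt (f y) δa with hle | hlt
      · have hAy := hA y hyG hle
        have h2 : Ca * (ε/2)^α ≤ Ca * (infDist y (frontier G))^α :=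
          mul_le_mul_of_nonneg_left (Real.rpow_le_rpow (by positivity) hyd hα.le) hCa.le
        exact le_trans (min_le_right _ _) (le_trans h2 hAy)
      · exact le_trans (min_le_left _ _) hlt.le
    have hball2 : ball w (ε/2) ⊆ ball x r := (ball_subset_ball (by linarith)).trans hwx
    have key : ENNReal.ofReal m * volume (ball w (ε/2))
        ≤ volume.withDensity (fun y => ENNReal.ofReal (f y)) (ball x r) := by
      refine le_trans ?_ (measure_mono hball2 (μ := volume.withDensity fun y => ENNReal.ofReal (f y)))
      rw [withDensity_apply _ measurableSet_ball,
        ← setLIntegral_const (ball w (ε/2)) (ENNReal.ofReal m)]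
      exact setLIntegral_mono hf_meas.ennreal_ofReal fun y hy =>
        ENNReal.ofReal_le_ofReal (hfm y hy)
    have hvol : volume (ball w (ε/2)) = ENNReal.ofReal ((ε/2) ^ d) * vb := by
      rw [Measure.addHaar_ball_of_pos volume w (by positivity : (0:ℝ) < ε/2),
        finrank_euclideanSpace_fin]
    have hreal : a * r ^ (α + (d:ℝ)) ≤ m * ((ε/2) ^ d * v) := by
      have hrad : r ^ (α + (d:ℝ)) = r ^ α * r ^ d := by
        rw [Real.rpow_add hr, Real.rpow_natCast]
      have hε2 : ε / 2 = r * (1/(2*K)) := by rw [hε, div_div, mul_one_div, mul_comm K 2]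
      have hrα1 : r ^ α ≤ 1 := Real.rpow_le_one hr.le hr1.le hα.le
      have hc₁m : c₁ * r ^ α ≤ m := by
        refine le_min ?_ ?_
        · calc c₁ * r ^ α ≤ δa * 1 :=
              mul_le_mul (min_le_left _ _) hrα1 (Real.rpow_nonneg hr.le _) hδa.le
            _ = δa := mul_one _
        · have hmr : (ε/2) ^ α = r ^ α * (1/(2*K)) ^ α := by
            rw [hε2, Real.mul_rpow hr.le (by positivity)]
          rw [hmr]
          calc c₁ * r ^ α ≤ (Ca * (1/(2*K)) ^ α) * r ^ α :=
                mul_le_mul_of_nonneg_right (min_le_right _ _) (Real.rpow_nonneg hr.le _)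
            _ = Ca * (r ^ α * (1/(2*K)) ^ α) := by ring
      have hεd : (ε/2) ^ d = (1/(2*K)) ^ d * r ^ d := by
        rw [hε2, mul_pow]; ring
      calc a * r ^ (α + (d:ℝ)) = a * (r ^ α * r ^ d) := by rw [hrad]
        _ ≤ (c₁ * (1/(2*K)) ^ d * v) * (r ^ α * r ^ d) :=
            mul_le_mul_of_nonneg_right (min_le_right _ _) (by positivity)
        _ = (c₁ * r ^ α) * ((1/(2*K)) ^ d * r ^ d * v) := by ring
        _ ≤ m * ((1/(2*K)) ^ d * r ^ d * v) :=
            mul_le_mul_of_nonneg_right hc₁m (by positivity)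
        _ = m * ((ε/2) ^ d * v) := by rw [hεd]
    calc ENNReal.ofReal (a * r ^ (α + (d:ℝ)))
        ≤ ENNReal.ofReal (m * ((ε/2) ^ d * v)) := ENNReal.ofReal_le_ofReal hreal
      _ = ENNReal.ofReal m * (ENNReal.ofReal ((ε/2) ^ d) * ENNReal.ofReal v) := by
          rw [ENNReal.ofReal_mul hmpos.le, ENNReal.ofReal_mul (by positivity)]
      _ = ENNReal.ofReal m * (ENNReal.ofReal ((ε/2) ^ d) * vb) := by
          rw [hv, ENNReal.ofReal_toReal hvb_ne_top]
      _ = ENNReal.ofReal m * volume (ball w (ε/2)) := by rw [hvol]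
      _ ≤ _ := key
end

section
/- Let (M,ρ) be a metric space and let μ be a Borel probability measure on M whose support X_μ is compact and which satisfies the (a,b)-standard assumption for some a>0, b>0. Let Ψ : (0,∞) → (0,∞) be the strictly decreasing bijection Ψ(η) = exp(−η)/η and let Ψ^{−1} be its inverse. Let X₁,…,Xₙ be i.i.d. with law μ and X̂ₙ = {X₁,…,Xₙ}. Then for every α ∈ (0,1), ℙ( d_H(X_μ, X̂ₙ) > 2 η_n ) ≤ α, where η_n = [ (1/(n a)) · Ψ^{−1}( α/(n 2^b) ) ]^{1/b}. -/
open MeasureTheory Metric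

open MeasureTheory Metric

/-- A compact set admits a finite maximal `η`-separated net. -/
theorem exists_finite_net {M : Type*} [MetricSpace M] {K : Set M} (hK : IsCompact K)
    {η : ℝ} (hη : 0 < η) :
    ∃ S : Finset M, ↑S ⊆ K ∧ (∀ x ∈ K, ∃ s ∈ S, dist x s < η) ∧
      (↑S : Set M).Pairwise fun p q => η ≤ dist p q := by
  classical
  have hzorn : ∀ c ⊆ {T : Set M | T ⊆ K ∧ T.Pairwise fun p q => η ≤ dist p q},
      IsChain (· ⊆ ·) c → ∃ ub ∈ {T : Set M | T ⊆ K ∧ T.Pairwise fun p q => η ≤ dist p q},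
        ∀ s ∈ c, s ⊆ ub := by
    intro c hcS hchain
    by_cases hc : c.Nonempty
    · refine ⟨⋃₀ c, ⟨?_, ?_⟩, fun s hs => Set.subset_sUnion_of_mem hs⟩
      · exact Set.sUnion_subset fun s hs => (hcS hs).1
      · intro p hp q hq hne
        obtain ⟨s, hs, hps⟩ := hp
        obtain ⟨u, hu, hqu⟩ := hq
        rcases hchain.total hs hu with h | h
        · exact (hcS hu).2 (h hps) hqu hne
        · exact (hcS hs).2 hps (h hqu) hne
    · exact ⟨∅, ⟨Set.empty_subset _, Set.pairwise_empty _⟩,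
        fun s hs => absurd ⟨s, hs⟩ hc⟩
  obtain ⟨T, hT, hTmax⟩ := zorn_subset
      {T : Set M | T ⊆ K ∧ T.Pairwise fun p q => η ≤ dist p q} hzorn
  simp only [Set.mem_setOf_eq] at hT
  obtain ⟨hTK, hTsep⟩ := hT
  -- T is finite
  obtain ⟨c, hcK, hcfin, hccov⟩ := hK.finite_cover_balls (half_pos hη)
  have hfin : T.Finite := by
    have hchoice : ∀ p ∈ T, ∃ q ∈ c, p ∈ ball q (η / 2) := by
      intro p hp
      have := hccov (hTK hp)
      simpa using this
    choose f hf hfb using hchoice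
    have hinj : Set.InjOn (fun p => if h : p ∈ T then f p h else p) T := by
      intro p hp q hq hpq
      simp only at hpq
      rw [dif_pos hp, dif_pos hq] at hpq
      by_contra hne
      have h1 := hfb p hp
      have h2 := hfb q hq
      rw [hpq] at h1
      have : dist p q < η := by
        have := dist_triangle p (f q hq) q
        rw [mem_ball] at h1 h2
        rw [dist_comm (f q hq) q] at this
        linarith
      exact absurd (hTsep hp hq hne) (not_le.2 this)
    have himg : (fun p => if h : p ∈ T then f p h else p) '' T ⊆ c := by
      rintro _ ⟨p, hp, rfl⟩
      simpa [dif_pos hp] using hf p hp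
    exact Set.Finite.of_finite_image (hcfin.subset himg) hinj
  refine ⟨hfin.toFinset, by simpa using hTK, ?_, by simpa using hTsep⟩
  intro x hx
  by_contra hcon
  push_neg at hcon
  have hxT : x ∉ T := by
    intro hxT
    have := hcon x (hfin.mem_toFinset.2 hxT)
    simp [hη.le] at this
    linarith
  have hins : insert x T ∈ {T : Set M | T ⊆ K ∧ T.Pairwise fun p q => η ≤ dist p q} := by
    constructor
    · exact Set.insert_subset hx hTK
    · haveI : Std.Symm (fun p q : M => η ≤ dist p q) := ⟨fun p q h => by rwa [dist_comm]⟩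
      refine Set.pairwise_insert_of_symmetric |>.2 ⟨hTsep, ?_⟩
      intro q hq hne
      have := hcon q (hfin.mem_toFinset.2 hq)
      rw [dist_comm] at this ⊢
      exact this
  have hsub := hTmax hins (Set.subset_insert x T)
  exact hxT (hsub (Set.mem_insert x T))

/-- Let `μ` be a Borel probability measure on a metric space `M` whose
support `Xμ` (the smallest closed set of full measure) is compact and which satisfies
the `(a,b)`-standard assumption. Let `Ψ(η) = exp(-η)/η` on `(0,∞)` and let
`t = Ψ⁻¹(α/(n 2ᵇ))` (i.e. `t > 0` with `exp(-t)/t = α/(n 2ᵇ)`). Then for `α ∈ (0,1)`,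
with `ηₙ = (t/(n a))^{1/b}`, one has `ℙ(d_H(Xμ, X̂ₙ) > 2 ηₙ) ≤ α`, where
`X̂ₙ = {X₁,…,Xₙ}` for `X₁,…,Xₙ` i.i.d. of law `μ` (the product measure on
`Fin n → M`). -/
theorem stmt_16 {M : Type*} [MetricSpace M] [MeasurableSpace M] [BorelSpace M]
    (μ : Measure M) [IsProbabilityMeasure μ]
    (Xμ : Set M) (hXclosed : IsClosed Xμ) (hXfull : μ Xμ = 1)
    (hXmin : ∀ F : Set M, IsClosed F → μ F = 1 → Xμ ⊆ F)
    (hXcpt : IsCompact Xμ)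
    (a b : ℝ) (ha : 0 < a) (hb : 0 < b)
    (hstd : ∀ x ∈ Xμ, ∀ r : ℝ, 0 < r →
      ENNReal.ofReal (min (a * r ^ b) 1) ≤ μ (ball x r))
    (n : ℕ) (hn : 1 ≤ n) (α : ℝ) (hα : 0 < α) (hα1 : α < 1)
    (t : ℝ) (ht : 0 < t) (hΨ : Real.exp (-t) / t = α / (n * 2 ^ b)) :
    (Measure.pi fun _ : Fin n => μ)
        {ω : Fin n → M |
          2 * (t / (n * a)) ^ ((1 : ℝ) / b) < hausdorffDist Xμ (Set.range ω)}
      ≤ ENNReal.ofReal α := by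
  classical
  have npos : (0:ℝ) < n := by exact_mod_cast hn
  set η : ℝ := (t / (n * a)) ^ ((1:ℝ)/b) with hη_def
  have hηpos : 0 < η := Real.rpow_pos_of_pos (div_pos ht (mul_pos npos ha)) _
  have hηb : η ^ b = t / (n * a) := by
    rw [hη_def, ← Real.rpow_mul (div_pos ht (mul_pos npos ha)).le,
      one_div_mul_cancel hb.ne', Real.rpow_one]
  have haηb : a * η ^ b = t / n := by
    rw [hηb]; field_simp
  have h2bpos : (0:ℝ) < 2 ^ b := Real.rpow_pos_of_pos (by norm_num) _
  have h2b1 : (1:ℝ) ≤ 2 ^ b := Real.one_le_rpow (by norm_num) hb.le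
  have haηb2 : a * (η / 2) ^ b = t / (n * 2 ^ b) := by
    rw [Real.div_rpow hηpos.le (by norm_num), hηb]
    field_simp
  -- Xμ nonempty
  have hXne : Xμ.Nonempty := by
    rw [Set.nonempty_iff_ne_empty]
    rintro rfl
    simp at hXfull
  -- finite net
  obtain ⟨S, hSX, hScov, hSsep⟩ := exists_finite_net hXcpt hηpos
  have hSne : S.Nonempty := by
    obtain ⟨x, hx⟩ := hXne
    obtain ⟨s, hs, -⟩ := hScov x hx
    exact ⟨s, hs⟩
  -- event inclusion
  set P : Measure (Fin n → M) := Measure.pi fun _ : Fin n => μ with hP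
  have hincl : {ω : Fin n → M | 2 * η < hausdorffDist Xμ (Set.range ω)} ⊆
      (⋃ i : Fin n, {ω : Fin n → M | ω i ∈ Xμᶜ}) ∪
      ⋃ s ∈ S, {ω : Fin n → M | ∀ i, ω i ∉ ball s η} := by
    intro ω hω
    by_contra hcon
    simp only [Set.mem_union, Set.mem_iUnion, not_or, not_exists, Set.mem_setOf_eq,
      Set.mem_compl_iff, not_not, not_forall] at hcon
    obtain ⟨hin, hmiss⟩ := hcon
    have : hausdorffDist Xμ (Set.range ω) ≤ 2 * η := by
      apply hausdorffDist_le_of_mem_dist (by positivity)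
      · intro x hx
        obtain ⟨s, hs, hxs⟩ := hScov x hx
        obtain ⟨i, hi⟩ := hmiss s hs
        refine ⟨ω i, Set.mem_range_self i, ?_⟩
        have := dist_triangle x s (ω i)
        rw [mem_ball, dist_comm] at hi
        linarith
      · rintro _ ⟨i, rfl⟩
        exact ⟨ω i, hin i, by rw [dist_self]; positivity⟩
    exact absurd hω (by simp only [Set.mem_setOf_eq]; linarith)
  have hXc : MeasurableSet Xμ := hXclosed.measurableSet
  -- bad event has measure zero
  have hbad : P (⋃ i : Fin n, {ω : Fin n → M | ω i ∈ Xμᶜ}) = 0 := by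
    refine measure_iUnion_null fun i => ?_
    have heq : {ω : Fin n → M | ω i ∈ Xμᶜ} =
        Set.pi Set.univ (fun j => if j = i then Xμᶜ else Set.univ) := by
      ext ω
      simp only [Set.mem_setOf_eq, Set.mem_pi, Set.mem_univ, true_implies]
      constructor
      · intro h j
        by_cases hj : j = i <;> simp [hj, h]
      · intro h
        have := h i
        simpa using this
    rw [hP, heq, Measure.pi_pi]
    refine Finset.prod_eq_zero (Finset.mem_univ i) ?_
    simp [measure_compl hXc (measure_ne_top μ _), hXfull]
  -- measure of missing a ball
  have hmissball : ∀ s : M, P {ω : Fin n → M | ∀ i, ω i ∉ ball s η} =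
      μ ((ball s η)ᶜ) ^ n := by
    intro s
    have heq : {ω : Fin n → M | ∀ i, ω i ∉ ball s η} =
        Set.pi Set.univ (fun _ => (ball s η)ᶜ) := by
      ext ω; simp [Set.mem_pi]
    rw [hP, heq, Measure.pi_pi, Finset.prod_const, Finset.card_univ, Fintype.card_fin]
  have hmono : P {ω : Fin n → M | 2 * η < hausdorffDist Xμ (Set.range ω)} ≤
      ∑ s ∈ S, μ ((ball s η)ᶜ) ^ n := by
    calc P {ω : Fin n → M | 2 * η < hausdorffDist Xμ (Set.range ω)}
        ≤ P ((⋃ i : Fin n, {ω : Fin n → M | ω i ∈ Xμᶜ}) ∪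
            ⋃ s ∈ S, {ω : Fin n → M | ∀ i, ω i ∉ ball s η}) := measure_mono hincl
      _ ≤ P (⋃ i : Fin n, {ω : Fin n → M | ω i ∈ Xμᶜ}) +
            P (⋃ s ∈ S, {ω : Fin n → M | ∀ i, ω i ∉ ball s η}) := measure_union_le _ _
      _ = P (⋃ s ∈ S, {ω : Fin n → M | ∀ i, ω i ∉ ball s η}) := by rw [hbad, zero_add]
      _ ≤ ∑ s ∈ S, P {ω : Fin n → M | ∀ i, ω i ∉ ball s η} := measure_biUnion_finset_le _ _
      _ = ∑ s ∈ S, μ ((ball s η)ᶜ) ^ n := by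
          exact Finset.sum_congr rfl fun s _ => hmissball s
  by_cases hcase : t < n
  · -- main case
    have hq1 : t / (n * 2 ^ b) < 1 := by
      rw [div_lt_one (by positivity)]
      calc t < n := hcase
        _ ≤ n * 2 ^ b := le_mul_of_one_le_right npos.le h2b1
    have hp1 : t / n < 1 := by rw [div_lt_one npos]; exact hcase
    have hppos : 0 < t / n := div_pos ht npos
    have hqpos : 0 < t / (n * 2 ^ b) := div_pos ht (by positivity)
    -- each missing probability ≤ exp(-t)
    have hterm : ∀ s ∈ S, μ ((ball s η)ᶜ) ^ n ≤ ENNReal.ofReal (Real.exp (-t)) := by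
      intro s hs
      have hball : ENNReal.ofReal (t / n) ≤ μ (ball s η) := by
        have := hstd s (hSX hs) η hηpos
        rwa [haηb, min_eq_left hp1.le] at this
      have hcompl : μ ((ball s η)ᶜ) ≤ ENNReal.ofReal (1 - t / n) := by
        rw [measure_compl measurableSet_ball (measure_ne_top μ _), measure_univ,
          ENNReal.ofReal_sub _ hppos.le, ENNReal.ofReal_one]
        exact tsub_le_tsub_left hball 1
      calc μ ((ball s η)ᶜ) ^ n ≤ ENNReal.ofReal (1 - t / n) ^ n :=
            pow_le_pow_left' hcompl n
        _ = ENNReal.ofReal ((1 - t / n) ^ n) := by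
            rw [ENNReal.ofReal_pow (by linarith)]
        _ ≤ ENNReal.ofReal (Real.exp (-t)) := by
            apply ENNReal.ofReal_le_ofReal
            have h1 : (1 - t / n) ≤ Real.exp (-(t / n)) := by
              have := Real.add_one_le_exp (-(t / n))
              linarith
            calc (1 - t / n) ^ n ≤ Real.exp (-(t / n)) ^ n :=
                  pow_le_pow_left₀ (by linarith) h1 n
              _ = Real.exp (-(t / n) * n) := by rw [← Real.exp_nat_mul]; ring_nf
              _ = Real.exp (-t) := by
                  congr 1; field_simp
      -- card bound via disjoint small balls
    have hdisj : (↑S : Set M).PairwiseDisjoint (fun s => ball s (η / 2)) := by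
      intro p hp q hq hne
      exact ball_disjoint_ball (by linarith [hSsep hp hq hne])
    have hcard : (S.card : ENNReal) * ENNReal.ofReal (t / (n * 2 ^ b)) ≤ 1 := by
      calc (S.card : ENNReal) * ENNReal.ofReal (t / (n * 2 ^ b))
          = ∑ s ∈ S, ENNReal.ofReal (t / (n * 2 ^ b)) := by
            rw [Finset.sum_const, nsmul_eq_mul]
        _ ≤ ∑ s ∈ S, μ (ball s (η / 2)) := by
            refine Finset.sum_le_sum fun s hs => ?_
            have := hstd s (hSX hs) (η / 2) (by positivity)
            rwa [haηb2, min_eq_left hq1.le] at this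
        _ = μ (⋃ s ∈ S, ball s (η / 2)) :=
            (measure_biUnion_finset hdisj fun s _ => measurableSet_ball).symm
        _ ≤ 1 := prob_le_one
    -- exp(-t) = α * (t / (n * 2^b))
    have hexp : Real.exp (-t) = α * (t / (n * 2 ^ b)) := by
      have : Real.exp (-t) = t * (α / (n * 2 ^ b)) := by
        field_simp at hΨ ⊢
        linarith [hΨ]
      rw [this]; field_simp
    calc P {ω : Fin n → M | 2 * η < hausdorffDist Xμ (Set.range ω)}
        ≤ ∑ s ∈ S, μ ((ball s η)ᶜ) ^ n := hmono
      _ ≤ ∑ s ∈ S, ENNReal.ofReal (Real.exp (-t)) := Finset.sum_le_sum hterm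
      _ = (S.card : ENNReal) * ENNReal.ofReal (Real.exp (-t)) := by
          rw [Finset.sum_const, nsmul_eq_mul]
      _ = (S.card : ENNReal) * (ENNReal.ofReal (t / (n * 2 ^ b)) * ENNReal.ofReal α) := by
          rw [hexp, ENNReal.ofReal_mul hα.le, mul_comm (ENNReal.ofReal α)]
      _ = ((S.card : ENNReal) * ENNReal.ofReal (t / (n * 2 ^ b))) * ENNReal.ofReal α := by
          ring
      _ ≤ 1 * ENNReal.ofReal α := mul_le_mul_left hcard _
      _ = ENNReal.ofReal α := one_mul _
  · -- t ≥ n: every ball has full measure, probability zero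
    push_neg at hcase
    have hfull : ∀ s ∈ S, μ ((ball s η)ᶜ) = 0 := by
      intro s hs
      have h1 : (1:ℝ) ≤ a * η ^ b := by
        rw [haηb, le_div_iff₀ npos]; linarith
      have hball : (1:ENNReal) ≤ μ (ball s η) := by
        have := hstd s (hSX hs) η hηpos
        rwa [min_eq_right h1, ENNReal.ofReal_one] at this
      have : μ (ball s η) = 1 := le_antisymm prob_le_one hball
      rw [measure_compl measurableSet_ball (measure_ne_top μ _), measure_univ, this,
        tsub_self]
    calc P {ω : Fin n → M | 2 * η < hausdorffDist Xμ (Set.range ω)}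
        ≤ ∑ s ∈ S, μ ((ball s η)ᶜ) ^ n := hmono
      _ = 0 := by
          refine Finset.sum_eq_zero fun s hs => ?_
          rw [hfull s hs, zero_pow (by omega)]
      _ ≤ ENNReal.ofReal α := zero_le
end
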